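/- arXiv:0803.1673 — 5 statements merged into one kernel-verified Lean document; each statement's English description precedes it below -/
import Mathlib

section
/- Let d ≥ 1 and let T_{μν} (μ, ν ∈ Fin d) be a family of smooth functions on ℝ^d that is symmetric, T_{μν} = T_{νμ}, and satisfies the closedness condition ∂_μ T_{νλ} = ∂_ν T_{μλ} on all of ℝ^d for all μ, ν, λ. Then there exists a smooth function f : ℝ^d → ℝ such that T_{μν} = ∂_μ∂_ν f for all μ, ν. (Equivalently, H¹_K(ℝ^d) = 0: every closed element of K¹(ℝ^d) is the Hessian of a smooth function.) -/
/-- The partial derivative of `f : ℝ^d → ℝ` in the `μ`-th coordinate direction. -/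
noncomputable def pd {d : ℕ} (μ : Fin d) (f : EuclideanSpace ℝ (Fin d) → ℝ) :
    EuclideanSpace ℝ (Fin d) → ℝ :=
  fun x => fderiv ℝ f x (EuclideanSpace.single μ 1)

open MeasureTheory Metric intervalIntegral

lemma poincare_one_form {d : ℕ} (ω : EuclideanSpace ℝ (Fin d) → (EuclideanSpace ℝ (Fin d) →L[ℝ] ℝ))
    (hω : ContDiff ℝ (⊤ : ℕ∞) ω)
    (hsym : ∀ x v w, fderiv ℝ ω x v w = fderiv ℝ ω x w v) :
    ∃ f : EuclideanSpace ℝ (Fin d) → ℝ, ContDiff ℝ (⊤ : ℕ∞) f ∧ ∀ x, fderiv ℝ f x = ω x := by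
  classical
  set E := EuclideanSpace ℝ (Fin d)
  have hωc : Continuous ω := hω.continuous
  have hfd : ContDiff ℝ (⊤ : ℕ∞) (fderiv ℝ ω) := hω.fderiv_right (le_of_eq rfl)
  have hfdc : Continuous (fderiv ℝ ω) := hfd.continuous
  set f : E → ℝ := fun x => ∫ t in (0:ℝ)..1, ω (t • x) x with hfdef
  set F' : E → ℝ → (E →L[ℝ] ℝ) :=
    fun x t => ω (t • x) + t • ((fderiv ℝ ω (t • x)).flip x) with hF'def
  have hdiff : ∀ (t : ℝ) (x : E), HasFDerivAt (fun y => ω (t • y) y) (F' x t) x := by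
    intro t x
    have h1 : HasFDerivAt (fun y : E => t • y) (t • ContinuousLinearMap.id ℝ E) x := by
      exact (hasFDerivAt_id x).const_smul t
    have h2 : HasFDerivAt ω (fderiv ℝ ω (t • x)) (t • x) :=
      (hω.differentiable (by simp) (t • x)).hasFDerivAt
    have h3 := (h2.comp x h1).clm_apply (hasFDerivAt_id x)
    refine h3.congr_fderiv ?_
    ext v
    simp [F', ContinuousLinearMap.flip_apply, _root_.map_smul, smul_eq_mul]
    try ring
  have hflipc : ∀ x : E, Continuous (fun t : ℝ => (fderiv ℝ ω (t • x)).flip x) := by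
    intro x
    have h : (fun t : ℝ => (fderiv ℝ ω (t • x)).flip x)
        = fun t : ℝ => ((ContinuousLinearMap.apply ℝ ℝ x).comp (fderiv ℝ ω (t • x))) := by
      funext t; ext v
      simp [ContinuousLinearMap.flip_apply]
    rw [h]
    exact continuous_const.clm_comp (hfdc.comp (continuous_id.smul continuous_const))
  have hF'c : ∀ x : E, Continuous (fun t : ℝ => F' x t) := fun x =>
    (hωc.comp (continuous_id.smul continuous_const)).add (continuous_id.smul (hflipc x))
  have key : ∀ x₀ : E, HasFDerivAt f (ω x₀) x₀ := by
    intro x₀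
    set R : ℝ := ‖x₀‖ + 1 with hR
    obtain ⟨C₁, hC₁⟩ := (isCompact_closedBall (0 : E) R).exists_bound_of_continuousOn (f := fderiv ℝ ω)
      hfdc.continuousOn
    obtain ⟨C₂, hC₂⟩ := (isCompact_closedBall (0 : E) R).exists_bound_of_continuousOn (f := ω)
      hωc.continuousOn
    have hxnorm : ∀ x ∈ ball x₀ 1, ‖x‖ ≤ R := by
      intro x hx
      have h1 : ‖x - x₀‖ < 1 := mem_ball_iff_norm.mp hx
      calc ‖x‖ = ‖x₀ + (x - x₀)‖ := by congr 1; abel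
        _ ≤ ‖x₀‖ + ‖x - x₀‖ := norm_add_le _ _
        _ ≤ R := by rw [hR]; linarith
    have hmem : ∀ (t : ℝ), t ∈ Set.uIoc (0:ℝ) 1 → ∀ x ∈ ball x₀ 1,
        t • x ∈ closedBall (0 : E) R := by
      intro t ht x hx
      rw [Set.uIoc_of_le zero_le_one] at ht
      rw [mem_closedBall_zero_iff, norm_smul]
      have h1 : |t| ≤ 1 := abs_le.2 ⟨by linarith [ht.1], ht.2⟩
      calc ‖t‖ * ‖x‖ ≤ 1 * R :=
        mul_le_mul h1 (hxnorm x hx) (norm_nonneg _) zero_le_one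
        _ = R := one_mul R
    have hb : ∀ t ∈ Set.uIoc (0:ℝ) 1, ∀ x ∈ ball x₀ 1, ‖F' x t‖ ≤ C₂ + |C₁| * R := by
      intro t ht x hx
      have htx := hmem t ht x hx
      rw [Set.uIoc_of_le zero_le_one] at ht
      have h1 : |t| ≤ 1 := abs_le.2 ⟨by linarith [ht.1], ht.2⟩
      calc ‖F' x t‖ ≤ ‖ω (t • x)‖ + ‖t • ((fderiv ℝ ω (t • x)).flip x)‖ := norm_add_le _ _
        _ ≤ C₂ + |C₁| * R := by
          gcongr
          · exact hC₂ _ htx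
          · rw [norm_smul]
            calc ‖t‖ * ‖(fderiv ℝ ω (t • x)).flip x‖
                ≤ 1 * (‖(fderiv ℝ ω (t • x)).flip‖ * ‖x‖) := by
                  refine mul_le_mul h1 (ContinuousLinearMap.le_opNorm _ _) (norm_nonneg _)
                    zero_le_one
              _ = ‖fderiv ℝ ω (t • x)‖ * ‖x‖ := by
                  rw [one_mul, ContinuousLinearMap.opNorm_flip]
              _ ≤ |C₁| * R := by
                  refine mul_le_mul ((hC₁ _ htx).trans (le_abs_self _)) (hxnorm x hx)
                    (norm_nonneg _) (abs_nonneg _)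
    have hmain := hasFDerivAt_integral_of_dominated_of_fderiv_le (𝕜 := ℝ) (μ := volume)
      (F := fun x t => ω (t • x) x) (F' := F') (x₀ := x₀) (a := 0) (b := 1)
      (bound := fun _ => C₂ + |C₁| * R) (ball_mem_nhds x₀ one_pos)
      (Filter.Eventually.of_forall fun x =>
        (((hωc.comp (continuous_id.smul continuous_const)).clm_apply
          continuous_const).aestronglyMeasurable))
      (((hωc.comp (continuous_id.smul continuous_const)).clm_apply
          continuous_const).intervalIntegrable 0 1)
      ((hF'c x₀).aestronglyMeasurable)
      (ae_of_all _ hb) (intervalIntegrable_const) (ae_of_all _ fun t _ x _ => hdiff t x)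
    have hint : IntervalIntegrable (F' x₀) volume 0 1 := (hF'c x₀).intervalIntegrable 0 1
    have hval : (∫ t in (0:ℝ)..1, F' x₀ t) = ω x₀ := by
      ext v
      rw [ContinuousLinearMap.intervalIntegral_apply hint]
      have heq : ∀ t : ℝ, F' x₀ t v
          = (ω (t • x₀)) v + t * ((fderiv ℝ ω (t • x₀)) x₀) v := by
        intro t
        simp [F', ContinuousLinearMap.flip_apply, smul_eq_mul]
        rw [hsym (t • x₀) v x₀]
        exact Or.inl rfl
      rw [intervalIntegral.integral_congr
        (g := fun t => (ω (t • x₀)) v + t * ((fderiv ℝ ω (t • x₀)) x₀) v)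
        (fun t _ => heq t)]
      have hder : ∀ t ∈ Set.uIcc (0:ℝ) 1, HasDerivAt (fun s : ℝ => s * (ω (s • x₀) v))
          ((ω (t • x₀)) v + t * ((fderiv ℝ ω (t • x₀)) x₀) v) t := by
        intro t _
        have h1 : HasDerivAt (fun s : ℝ => s • x₀) x₀ t := by
          simpa using (hasDerivAt_id t).smul_const x₀
        have h2 : HasDerivAt (fun s : ℝ => ω (s • x₀)) ((fderiv ℝ ω (t • x₀)) x₀) t :=
          (hω.differentiable (by simp) (t • x₀)).hasFDerivAt.comp_hasDerivAt t h1
        have h3 : HasDerivAt (fun s : ℝ => (ω (s • x₀)) v)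
            (((fderiv ℝ ω (t • x₀)) x₀) v) t := by
          simpa using h2.clm_apply (hasDerivAt_const t v)
        simpa using (hasDerivAt_id t).fun_mul h3
      have hcont2 : Continuous fun t : ℝ => (ω (t • x₀)) v + t * ((fderiv ℝ ω (t • x₀)) x₀) v := by
        refine Continuous.add ?_ ?_
        · exact (hωc.comp (continuous_id.smul continuous_const)).clm_apply continuous_const
        · exact continuous_id.mul (((hfdc.comp
            (continuous_id.smul continuous_const)).clm_apply continuous_const).clm_apply
            continuous_const)
      rw [intervalIntegral.integral_eq_sub_of_hasDerivAt hder (hcont2.intervalIntegrable 0 1)]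
      simp
    rw [hval] at hmain
    exact hmain
  refine ⟨f, ?_, fun x => (key x).fderiv⟩
  rw [contDiff_infty_iff_fderiv]
  refine ⟨fun x => (key x).differentiableAt, ?_⟩
  have : fderiv ℝ f = ω := funext fun x => (key x).fderiv
  rw [this]
  exact hω
lemma poincare_family {d : ℕ} (S : Fin d → EuclideanSpace ℝ (Fin d) → ℝ)
    (hS : ∀ μ, ContDiff ℝ (⊤ : ℕ∞) (S μ))
    (hcl : ∀ μ ν x, pd μ (S ν) x = pd ν (S μ) x) :
    ∃ f : EuclideanSpace ℝ (Fin d) → ℝ, ContDiff ℝ (⊤ : ℕ∞) f ∧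
      ∀ μ x, pd μ f x = S μ x := by
  classical
  set ω : EuclideanSpace ℝ (Fin d) → (EuclideanSpace ℝ (Fin d) →L[ℝ] ℝ) :=
    fun x => ∑ μ, S μ x • (EuclideanSpace.proj μ : EuclideanSpace ℝ (Fin d) →L[ℝ] ℝ) with hωdef
  have hωsm : ContDiff ℝ (⊤ : ℕ∞) ω := ContDiff.sum fun μ _ => (hS μ).smul (contDiff_const (c := (EuclideanSpace.proj μ : EuclideanSpace ℝ (Fin d) →L[ℝ] ℝ)))
  have hωfd : ∀ x : EuclideanSpace ℝ (Fin d), HasFDerivAt ω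
      (∑ μ, (fderiv ℝ (S μ) x).smulRight (EuclideanSpace.proj μ : EuclideanSpace ℝ (Fin d) →L[ℝ] ℝ)) x :=
    fun x => HasFDerivAt.fun_sum fun μ _ =>
      ((hS μ).differentiable (by simp) x).hasFDerivAt.smul_const (EuclideanSpace.proj μ : EuclideanSpace ℝ (Fin d) →L[ℝ] ℝ)
  have hdecomp : ∀ (L : EuclideanSpace ℝ (Fin d) →L[ℝ] ℝ) (v : EuclideanSpace ℝ (Fin d)),
      L v = ∑ ν, v ν * L (EuclideanSpace.single ν 1) := by
    intro L v
    have hv : v = ∑ ν, v ν • EuclideanSpace.single ν (1:ℝ) := by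
      have h := (EuclideanSpace.basisFun (Fin d) ℝ).sum_repr v
      simp only [EuclideanSpace.basisFun_apply, EuclideanSpace.basisFun_repr] at h
      exact h.symm
    conv_lhs => rw [hv]
    rw [map_sum]
    simp [_root_.map_smul, smul_eq_mul]
  have hform : ∀ (x v w : EuclideanSpace ℝ (Fin d)), fderiv ℝ ω x v w
      = ∑ μ, ∑ ν, v ν * (pd ν (S μ) x * w μ) := by
    intro x v w
    rw [(hωfd x).fderiv]
    simp only [ContinuousLinearMap.sum_apply, ContinuousLinearMap.smulRight_apply,
      ContinuousLinearMap.smul_apply, PiLp.proj_apply, smul_eq_mul]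
    refine Finset.sum_congr rfl fun μ _ => ?_
    rw [hdecomp (fderiv ℝ (S μ) x) v, Finset.sum_mul]
    refine Finset.sum_congr rfl fun ν _ => ?_
    simp only [pd]
    ring
  have hsym : ∀ x v w : EuclideanSpace ℝ (Fin d), fderiv ℝ ω x v w = fderiv ℝ ω x w v := by
    intro x v w
    rw [hform x v w, hform x w v, Finset.sum_comm]
    refine Finset.sum_congr rfl fun ν _ => Finset.sum_congr rfl fun μ _ => ?_
    rw [hcl ν μ x]
    ring
  obtain ⟨f, hf1, hf2⟩ := poincare_one_form ω hωsm hsym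
  refine ⟨f, hf1, fun μ x => ?_⟩
  have : pd μ f x = ω x (EuclideanSpace.single μ 1) := by rw [pd, hf2 x]
  rw [this, hωdef]
  simp [ContinuousLinearMap.sum_apply, PiLp.proj_apply,
    EuclideanSpace.single_apply]

/-- If `T = T μ ν` is a symmetric family of smooth functions on `ℝ^d`
(`d ≥ 1`) with `∂_μ T ν λ = ∂_ν T μ λ` everywhere, then `T` is the Hessian of some smooth
function `f`.  (Degree-1 Poincaré lemma for the complex `K^*(ℝ^d)`: `H¹_K(ℝ^d) = 0`.) -/
theorem stmt1 (d : ℕ) (hd : 1 ≤ d)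
    (T : Fin d → Fin d → EuclideanSpace ℝ (Fin d) → ℝ)
    (hsmooth : ∀ μ ν, ContDiff ℝ (⊤ : ℕ∞) (T μ ν))
    (hsymm : ∀ μ ν, T μ ν = T ν μ)
    (hclosed : ∀ (μ ν lam : Fin d) (x : EuclideanSpace ℝ (Fin d)),
      pd μ (T ν lam) x = pd ν (T μ lam) x) :
    ∃ f : EuclideanSpace ℝ (Fin d) → ℝ, ContDiff ℝ (⊤ : ℕ∞) f ∧
      ∀ (μ ν : Fin d) (x : EuclideanSpace ℝ (Fin d)), T μ ν x = pd μ (pd ν f) x := by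
  have h1 : ∀ lam : Fin d, ∃ g : EuclideanSpace ℝ (Fin d) → ℝ,
      ContDiff ℝ (⊤ : ℕ∞) g ∧ ∀ μ x, pd μ g x = T μ lam x := fun lam =>
    poincare_family (fun μ => T μ lam) (fun μ => hsmooth μ lam)
      (fun μ ν x => hclosed μ ν lam x)
  choose g hg1 hg2 using h1
  have hcl2 : ∀ μ ν x, pd μ (g ν) x = pd ν (g μ) x := by
    intro μ ν x
    rw [hg2 ν μ x, hg2 μ ν x, hsymm μ ν]
  obtain ⟨f, hf1, hf2⟩ := poincare_family g hg1 hcl2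
  refine ⟨f, hf1, fun μ ν x => ?_⟩
  have hpd : pd ν f = g ν := funext fun y => hf2 ν y
  rw [hpd, hg2 ν μ x]
end

section
/- Let d ≥ 1 and n ≥ 1, and let T : (Fin(n+1) → Fin d) → ℝ be a covariant (n+1)-tensor satisfying the K-condition of degree n. Then ψ(φ(T)) = T; explicitly, for every multi-index (μ_1, …, μ_n, ν): (2n/(n+1)) · (1/n!) · Σ_{σ ∈ Perm(Fin n)} sign(σ) · ½ (T(μ_{σ(1)}, …, μ_{σ(n)}, ν) + T(μ_{σ(1)}, …, μ_{σ(n−1)}, ν, μ_{σ(n)})) = T(μ_1, …, μ_n, ν). -/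
/-- The sign of a permutation, as a real number. -/
def sgn {n : ℕ} (σ : Equiv.Perm (Fin n)) : ℝ := ((Equiv.Perm.sign σ : ℤ) : ℝ)

namespace Stmt3Aux
open Equiv Equiv.Perm

variable {n : ℕ}

def castEquiv (n : ℕ) : Fin n ≃ {i : Fin (n+1) // (i : ℕ) < n} where
  toFun i := ⟨i.castSucc, by simp⟩
  invFun i := ⟨i.1, i.2⟩
  left_inv i := rfl
  right_inv i := by ext; rfl

def ext (σ : Perm (Fin n)) : Perm (Fin (n+1)) := σ.extendDomain (castEquiv n)

lemma ext_castSucc (σ : Perm (Fin n)) (i : Fin n) : ext σ i.castSucc = (σ i).castSucc := by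
  have := σ.extendDomain_apply_image (castEquiv n) i
  simpa [ext, castEquiv] using this

lemma ext_last (σ : Perm (Fin n)) : ext σ (Fin.last n) = Fin.last n :=
  σ.extendDomain_apply_not_subtype _ (by simp)

lemma sgn_ext (σ : Perm (Fin n)) : sgn (ext σ) = sgn σ := by
  simp [sgn, ext, sign_extendDomain]

lemma sgn_mul (σ τ : Perm (Fin n)) : sgn (σ * τ) = sgn σ * sgn τ := by
  simp [sgn, ← Int.cast_mul, ← Units.val_mul]

lemma sgn_sq (σ : Perm (Fin n)) : sgn σ * sgn σ = 1 := by
  simp [sgn, ← Int.cast_mul, ← Units.val_mul]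

lemma mul_sgn_sgn (a x : ℝ) (σ : Perm (Fin n)) : a * sgn σ * (sgn σ * x) = a * x := by
  rw [mul_assoc, ← mul_assoc (sgn σ), sgn_sq, one_mul]

lemma sgn_sgn_mul (x : ℝ) (σ : Perm (Fin n)) : sgn σ * (sgn σ * x) = x := by
  rw [← mul_assoc, sgn_sq, one_mul]

lemma phi_bijective (n : ℕ) :
    Function.Bijective (fun p : Fin (n+1) × Perm (Fin n) =>
      Equiv.swap p.1 (Fin.last n) * ext p.2) := by
  rw [Fintype.bijective_iff_injective_and_card]
  constructor
  · rintro ⟨k, σ⟩ ⟨k', σ'⟩ h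
    simp only at h
    have hk : k = k' := by
      have := congrArg (fun τ : Perm (Fin (n+1)) => τ (Fin.last n)) h
      simpa [Perm.mul_apply, ext_last] using this
    subst hk
    have hσ : ext σ = ext σ' := mul_left_cancel h
    have : σ = σ' := by
      refine Equiv.ext fun i => Fin.castSucc_injective n ?_
      have := congrArg (fun τ : Perm (Fin (n+1)) => τ i.castSucc) hσ
      simpa only [ext_castSucc] using this
    simp [this]
  · simp [Fintype.card_perm, Nat.factorial_succ]

/-- Sum over a permutation group decomposed along the last coordinate. -/
lemma sum_perm_decomp (F : Perm (Fin (n+1)) → ℝ) :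
    ∑ τ : Perm (Fin (n+1)), F τ =
      ∑ p : Fin (n+1) × Perm (Fin n), F (Equiv.swap p.1 (Fin.last n) * ext p.2) :=
  (Fintype.sum_bijective _ (phi_bijective n) _ _ (fun _ => rfl)).symm

/-- Sum over `σ` of `g (σ j)` equals `m! * ∑ k, g k`. -/
lemma sum_apply_eq (m : ℕ) (j : Fin (m+1)) (g : Fin (m+1) → ℝ) :
    ∑ σ : Perm (Fin (m+1)), g (σ j) = (m.factorial : ℝ) * ∑ k, g k := by
  have h1 : ∑ σ : Perm (Fin (m+1)), g (σ j) = ∑ σ : Perm (Fin (m+1)), g (σ 0) := by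
    refine Fintype.sum_bijective (fun σ => σ * Equiv.swap 0 j)
      (Group.mulRight_bijective _) (fun σ => g (σ j)) (fun σ => g (σ 0)) fun σ => ?_
    simp [Perm.mul_apply]
  rw [h1, ← (Equiv.Perm.decomposeFin (n := m)).symm.sum_comp (fun σ => g (σ 0)),
    Fintype.sum_prod_type]
  simp only [Equiv.Perm.decomposeFin_symm_apply_zero]
  simp only [Finset.sum_const, Finset.card_univ, Fintype.card_perm, nsmul_eq_mul,
    Fintype.card_fin, ← Finset.mul_sum]

end Stmt3Aux


set_option maxHeartbeats 1600000 in
open Equiv Equiv.Perm Stmt3Aux in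
/-- (Proposition 3: `ψ ∘ φ = Id` on `K^n`.)  Let `d ≥ 1`, `n ≥ 1`, and let
`T : (Fin (n+1) → Fin d) → ℝ` be a covariant `(n+1)`-tensor satisfying the K-condition of
degree `n`: antisymmetric in its first `n` indices (i.e. `T (μ ∘ σ) = sign σ * T μ` for every
permutation `σ` fixing the last slot), with vanishing full antisymmetrization over all `n+1`
indices.  Then for every multi-index `(μ₁,…,μ_n, ν)`,
`(2n/(n+1)) · (1/n!) · ∑_σ sign σ · ½ (T(μ_{σ(1)},…,μ_{σ(n)},ν) + T(μ_{σ(1)},…,μ_{σ(n−1)},ν,μ_{σ(n)}))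
  = T(μ₁,…,μ_n,ν)`. -/
theorem stmt3 (d n : ℕ) (hd : 1 ≤ d) (hn : 1 ≤ n)
    (T : (Fin (n + 1) → Fin d) → ℝ)
    (hTanti : ∀ σ : Equiv.Perm (Fin (n + 1)), σ (Fin.last n) = Fin.last n →
      ∀ μ : Fin (n + 1) → Fin d, T (fun i => μ (σ i)) = sgn σ * T μ)
    (hTfull : ∀ μ : Fin (n + 1) → Fin d,
      ∑ σ : Equiv.Perm (Fin (n + 1)), sgn σ * T (fun i => μ (σ i)) = 0) :
    ∀ (μ : Fin n → Fin d) (ν : Fin d),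
      (2 * (n : ℝ) / ((n : ℝ) + 1)) * (Nat.factorial n : ℝ)⁻¹ *
        ∑ σ : Equiv.Perm (Fin n), sgn σ *
          ((1 / 2 : ℝ) *
            (T (Fin.snoc (fun i => μ (σ i)) ν) +
             T ((Fin.snoc (fun i => μ (σ i)) ν : Fin (n + 1) → Fin d) ∘
                 Equiv.swap (⟨n - 1, by omega⟩ : Fin (n + 1)) (Fin.last n)))) =
      T (Fin.snoc μ ν) := by
  intro μ ν
  obtain ⟨m, rfl⟩ : ∃ m, n = m + 1 := ⟨n - 1, by omega⟩
  set μh : Fin (m + 1 + 1) → Fin d := Fin.snoc μ ν with hμh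
  set j : Fin (m + 1) := ⟨m, by omega⟩ with hj
  -- rewriting snoc through ext
  have hsnoc : ∀ σ : Perm (Fin (m + 1)),
      (Fin.snoc (fun i => μ (σ i)) ν : Fin (m + 1 + 1) → Fin d) = fun x => μh (ext σ x) := by
    intro σ; funext x
    refine Fin.lastCases ?_ (fun i => ?_) x
    · rw [Fin.snoc_last, ext_last, hμh, Fin.snoc_last]
    · rw [Fin.snoc_castSucc, ext_castSucc, hμh, Fin.snoc_castSucc]
  -- the key consequence of the full antisymmetrization
  have key : ∀ ρ : Fin (m + 1 + 1) → Fin d,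
      ∑ k : Fin (m + 1),
        T (fun x => ρ (Equiv.swap k.castSucc (Fin.last (m + 1)) x)) = T ρ := by
    intro ρ
    have h0 := hTfull ρ
    rw [sum_perm_decomp (fun τ => sgn τ * T (fun i => ρ (τ i)))] at h0
    have hterm : ∀ p : Fin (m + 1 + 1) × Perm (Fin (m + 1)),
        sgn (Equiv.swap p.1 (Fin.last (m + 1)) * ext p.2) *
          T (fun i => ρ ((Equiv.swap p.1 (Fin.last (m + 1)) * ext p.2) i))
        = sgn (Equiv.swap p.1 (Fin.last (m + 1))) *
            T (fun x => ρ (Equiv.swap p.1 (Fin.last (m + 1)) x)) := by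
      rintro ⟨k, σ⟩
      have h2 := hTanti (ext σ) (ext_last σ) (fun x => ρ (Equiv.swap k (Fin.last (m + 1)) x))
      have h1 : (fun i => ρ ((Equiv.swap k (Fin.last (m + 1)) * ext σ) i))
          = fun i => ρ (Equiv.swap k (Fin.last (m + 1)) (ext σ i)) := by
        funext i; simp [Perm.mul_apply]
      simp only at h2 ⊢
      rw [h1, h2, sgn_mul, sgn_ext, mul_sgn_sgn]
    simp only [hterm] at h0
    rw [Fintype.sum_prod_type] at h0
    simp only [Finset.sum_const, Finset.card_univ, Fintype.card_perm, Fintype.card_fin,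
      nsmul_eq_mul] at h0
    rw [← Finset.mul_sum] at h0
    have hfac : ((m + 1).factorial : ℝ) ≠ 0 := by
      exact_mod_cast (m + 1).factorial_ne_zero
    have h2 : ∑ k : Fin (m + 1 + 1), sgn (Equiv.swap k (Fin.last (m + 1))) *
        T (fun x => ρ (Equiv.swap k (Fin.last (m + 1)) x)) = 0 := by
      rcases mul_eq_zero.mp h0 with h | h
      · exact absurd h hfac
      · exact h
    have hswap : ∀ k : Fin (m + 1), sgn (Equiv.swap k.castSucc (Fin.last (m + 1))) = -1 := by
      intro k
      simp [sgn, Equiv.Perm.sign_swap (Fin.castSucc_lt_last k).ne]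
    have hlast : Equiv.swap (Fin.last (m + 1)) (Fin.last (m + 1)) = Equiv.refl _ :=
      Equiv.swap_self _
    rw [Fin.sum_univ_castSucc, hlast] at h2
    have hone : sgn (Equiv.refl (Fin (m + 1 + 1))) = 1 := by simp [sgn]
    have hρ : (fun x => ρ ((Equiv.refl (Fin (m + 1 + 1))) x)) = ρ := rfl
    rw [hone, hρ, one_mul] at h2
    simp only [hswap, neg_one_mul, Finset.sum_neg_distrib] at h2
    linarith [h2]
  -- the two partial sums
  have hA : ∀ σ : Perm (Fin (m + 1)),
      T (Fin.snoc (fun i => μ (σ i)) ν) = sgn σ * T μh := by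
    intro σ; rw [hsnoc σ, hTanti _ (ext_last σ), sgn_ext]
  have hB : ∀ σ : Perm (Fin (m + 1)),
      T ((Fin.snoc (fun i => μ (σ i)) ν : Fin (m + 1 + 1) → Fin d) ∘
          Equiv.swap (Fin.castSucc j) (Fin.last (m + 1)))
        = sgn σ * T (fun x => μh (Equiv.swap (Fin.castSucc (σ j)) (Fin.last (m + 1)) x)) := by
    intro σ
    have hmul : ext σ * Equiv.swap (Fin.castSucc j) (Fin.last (m + 1))
        = Equiv.swap (Fin.castSucc (σ j)) (Fin.last (m + 1)) * ext σ := by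
      rw [Equiv.mul_swap_eq_swap_mul, ext_castSucc, ext_last]
    have h2 := hTanti (ext σ) (ext_last σ)
      (fun x => μh (Equiv.swap (Fin.castSucc (σ j)) (Fin.last (m + 1)) x))
    have hcomp : ((Fin.snoc (fun i => μ (σ i)) ν : Fin (m + 1 + 1) → Fin d) ∘
          Equiv.swap (Fin.castSucc j) (Fin.last (m + 1)))
        = fun i => μh (Equiv.swap (Fin.castSucc (σ j)) (Fin.last (m + 1)) (ext σ i)) := by
      funext i
      have hx := congrArg (fun τ : Perm (Fin (m + 1 + 1)) => τ i) hmul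
      simp only [Perm.mul_apply] at hx
      simp only [Function.comp_apply, hsnoc σ]
      rw [hx]
    rw [hcomp, h2, sgn_ext]
  have hAsum : ∑ σ : Perm (Fin (m + 1)), sgn σ * T (Fin.snoc (fun i => μ (σ i)) ν)
      = ((m + 1).factorial : ℝ) * T μh := by
    calc ∑ σ : Perm (Fin (m + 1)), sgn σ * T (Fin.snoc (fun i => μ (σ i)) ν)
        = ∑ _σ : Perm (Fin (m + 1)), T μh := by
          refine Finset.sum_congr rfl fun σ _ => ?_
          rw [hA σ, sgn_sgn_mul]
      _ = ((m + 1).factorial : ℝ) * T μh := by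
          simp [Finset.sum_const, Finset.card_univ, Fintype.card_perm, Fintype.card_fin,
            nsmul_eq_mul]
  have hBsum : ∑ σ : Perm (Fin (m + 1)), sgn σ *
      T ((Fin.snoc (fun i => μ (σ i)) ν : Fin (m + 1 + 1) → Fin d) ∘
          Equiv.swap (Fin.castSucc j) (Fin.last (m + 1)))
      = (m.factorial : ℝ) * T μh := by
    calc ∑ σ : Perm (Fin (m + 1)), sgn σ *
        T ((Fin.snoc (fun i => μ (σ i)) ν : Fin (m + 1 + 1) → Fin d) ∘
            Equiv.swap (Fin.castSucc j) (Fin.last (m + 1)))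
        = ∑ σ : Perm (Fin (m + 1)),
            (fun k : Fin (m + 1) =>
              T (fun x => μh (Equiv.swap (Fin.castSucc k) (Fin.last (m + 1)) x))) (σ j) := by
          refine Finset.sum_congr rfl fun σ _ => ?_
          rw [hB σ, sgn_sgn_mul]
      _ = (m.factorial : ℝ) * ∑ k : Fin (m + 1),
            T (fun x => μh (Equiv.swap (Fin.castSucc k) (Fin.last (m + 1)) x)) := by
          exact sum_apply_eq m j
            (fun k => T (fun x => μh (Equiv.swap (Fin.castSucc k) (Fin.last (m + 1)) x)))
      _ = (m.factorial : ℝ) * T μh := by rw [key μh]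
  have hidx : (⟨m + 1 - 1, by omega⟩ : Fin (m + 1 + 1)) = Fin.castSucc j := by
    apply Fin.ext
    simp only [hj, Fin.coe_castSucc]
    omega
  rw [hidx]
  have hsplit : ∑ σ : Perm (Fin (m + 1)), sgn σ *
      ((1 / 2 : ℝ) *
        (T (Fin.snoc (fun i => μ (σ i)) ν) +
         T ((Fin.snoc (fun i => μ (σ i)) ν : Fin (m + 1 + 1) → Fin d) ∘
             Equiv.swap (Fin.castSucc j) (Fin.last (m + 1)))))
      = (1 / 2 : ℝ) *
        ((∑ σ : Perm (Fin (m + 1)), sgn σ * T (Fin.snoc (fun i => μ (σ i)) ν)) +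
         ∑ σ : Perm (Fin (m + 1)), sgn σ *
           T ((Fin.snoc (fun i => μ (σ i)) ν : Fin (m + 1 + 1) → Fin d) ∘
               Equiv.swap (Fin.castSucc j) (Fin.last (m + 1)))) := by
    rw [← Finset.sum_add_distrib, Finset.mul_sum]
    refine Finset.sum_congr rfl fun σ _ => ?_
    ring
  rw [hsplit, hAsum, hBsum]
  have hfac : (m.factorial : ℝ) ≠ 0 := by exact_mod_cast m.factorial_ne_zero
  have h1 : ((m : ℝ) + 1) + 1 ≠ 0 := by positivity
  rw [Nat.factorial_succ]
  push_cast
  field_simp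
end

section
/- Let d ≥ 1 and n ≥ 1, and let S : (Fin(n+2) → Fin d) → ℝ be a covariant (n+2)-tensor satisfying the G-condition of degree n+1, i.e. S is antisymmetric in its first n indices, symmetric in its last two indices, and satisfies the cyclic relation Σ_{i=0}^{n+1} (−1)^{i(n+1)} S(μ_{τ^i(1)}, …, μ_{τ^i(n+2)}) = 0 for every multi-index μ, where τ is the cyclic permutation of the n+2 index slots. Then for all indices μ_1, …, μ_n, ν, λ: S(μ_1,…,μ_n,ν,λ) = ((n+1)/(n+2)) · ( S_{[μ_1⋯μ_n ν]λ} + S_{[μ_1⋯μ_n λ]ν} ), where S_{[μ_1⋯μ_n ν]λ} denotes the antisymmetrization with 1/(n+1)! normalization of S over the bracketed n+1 indices, the last index held fixed. -/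
/-- Antisymmetrization (with `1/(n+1)!` normalization) of an `(n+2)`-tensor over its first
`n+1` indices, the last index held fixed. -/
noncomputable def asymFirst {d n : ℕ} (S : (Fin (n + 2) → Fin d) → ℝ)
    (w : Fin (n + 2) → Fin d) : ℝ :=
  (Nat.factorial (n + 1) : ℝ)⁻¹ *
    ∑ σ : Equiv.Perm (Fin (n + 1)),
      sgn σ * S (w ∘ Fin.snoc (Fin.castSucc ∘ ⇑σ) (Fin.last (n + 1)))

open Equiv Fin

def ep {m : ℕ} (e : Equiv.Perm (Fin m)) : Equiv.Perm (Fin (m + 1)) where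
  toFun := Fin.snoc (Fin.castSucc ∘ ⇑e) (Fin.last m)
  invFun := Fin.snoc (Fin.castSucc ∘ ⇑e.symm) (Fin.last m)
  left_inv := by
    intro x
    induction x using Fin.lastCases with
    | last => simp
    | cast j => simp
  right_inv := by
    intro x
    induction x using Fin.lastCases with
    | last => simp
    | cast j => simp

@[simp] lemma ep_castSucc {m : ℕ} (e : Equiv.Perm (Fin m)) (j : Fin m) :
    ep e (j.castSucc) = (e j).castSucc := by simp [ep]

@[simp] lemma ep_last {m : ℕ} (e : Equiv.Perm (Fin m)) : ep e (Fin.last m) = Fin.last m := by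
  simp [ep]

lemma ep_coe {m : ℕ} (e : Equiv.Perm (Fin m)) :
    ⇑(ep e) = Fin.snoc (Fin.castSucc ∘ ⇑e) (Fin.last m) := rfl

lemma ep_mul {m : ℕ} (e f : Equiv.Perm (Fin m)) : ep (e * f) = ep e * ep f := by
  ext x
  induction x using Fin.lastCases with
  | last => simp
  | cast j => simp

lemma ep_sign {m : ℕ} (e : Equiv.Perm (Fin m)) :
    Equiv.Perm.sign (ep e) = Equiv.Perm.sign e := by
  have hfe : ∃ f : Fin m ≃ {x : Fin (m+1) // x ≠ Fin.last m},
      ∀ j, (f j : Fin (m+1)) = j.castSucc := by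
    refine ⟨⟨fun j => ⟨j.castSucc, (Fin.castSucc_lt_last j).ne⟩,
      fun x => ⟨x.1.1, lt_of_le_of_ne (Nat.lt_succ_iff.mp x.1.2) (fun h => x.2 (Fin.ext h))⟩,
      ?_, ?_⟩, fun j => rfl⟩
    · intro j; ext; simp
    · intro x; ext; simp
  obtain ⟨f, hf⟩ := hfe
  have : ep e = e.extendDomain f := by
    ext x
    induction x using Fin.lastCases with
    | last =>
      rw [ep_last, Equiv.Perm.extendDomain_apply_not_subtype]
      simp
    | cast j =>
      have : (j.castSucc : Fin (m+1)) = (f j : Fin (m+1)) := (hf j).symm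
      rw [ep_castSucc, this, Equiv.Perm.extendDomain_apply_image, hf]
  rw [this, Equiv.Perm.sign_extendDomain]

open Fin.NatCast in
lemma rot_pow {m : ℕ} (i : ℕ) (j : Fin (m + 1)) :
    (finRotate (m + 1) ^ i) j = j + (i : Fin (m + 1)) := by
  induction i with
  | zero => simp
  | succ k ih =>
    rw [pow_succ']
    simp only [Equiv.Perm.mul_apply, finRotate_succ_apply, Nat.cast_add, Nat.cast_one]
    rw [ih]
    abel

-- sgn lemmas
lemma sgn_mul {m : ℕ} (a b : Equiv.Perm (Fin m)) : sgn (a * b) = sgn a * sgn b := by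
  simp [sgn]

lemma sgn_one {m : ℕ} : sgn (1 : Equiv.Perm (Fin m)) = 1 := by simp [sgn]

lemma sgn_swap {m : ℕ} {a b : Fin m} (h : a ≠ b) : sgn (Equiv.swap a b) = -1 := by
  simp [sgn, Equiv.Perm.sign_swap h]

lemma sgn_sq {m : ℕ} (a : Equiv.Perm (Fin m)) : sgn a * sgn a = 1 := by
  rcases Int.units_eq_one_or (Equiv.Perm.sign a) with h | h <;> simp [sgn, h]

lemma sgn_ep {m : ℕ} (e : Equiv.Perm (Fin m)) : sgn (ep e) = sgn e := by
  simp [sgn, ep_sign]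

-- un-extension
def unep {m : ℕ} (τ : Equiv.Perm (Fin (m + 1))) (h : τ (Fin.last m) = Fin.last m) :
    Equiv.Perm (Fin m) where
  toFun j := (τ j.castSucc).castPred (by
    intro hc
    exact (Fin.castSucc_lt_last j).ne (τ.injective (hc.trans h.symm)))
  invFun j := (τ.symm j.castSucc).castPred (by
    intro hc
    have : τ (Fin.last m) = j.castSucc := by
      rw [← hc, Equiv.apply_symm_apply]
    exact (Fin.castSucc_lt_last j).ne' (h.symm.trans this)
  )
  left_inv := by intro j; apply Fin.castSucc_injective; simp
  right_inv := by intro j; apply Fin.castSucc_injective; simp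

lemma ep_unep {m : ℕ} (τ : Equiv.Perm (Fin (m + 1))) (h : τ (Fin.last m) = Fin.last m) :
    ep (unep τ h) = τ := by
  ext x
  induction x using Fin.lastCases with
  | last => rw [ep_last, h]
  | cast j => rw [ep_castSucc]; simp [unep]

lemma F_bij {m : ℕ} : Function.Bijective
    (fun pe : Fin (m + 1) × Equiv.Perm (Fin m) =>
      Equiv.swap pe.1 (Fin.last m) * ep pe.2) := by
  constructor
  · rintro ⟨p, e⟩ ⟨p', e'⟩ hpe
    simp only at hpe
    have hp : p = p' := by
      have := congrArg (fun σ : Equiv.Perm (Fin (m+1)) => σ (Fin.last m)) hpe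
      simpa using this
    subst hp
    have he : ep e = ep e' := by
      exact mul_left_cancel hpe
    have : e = e' := by
      ext j
      have h2 : (e j).castSucc = (e' j).castSucc := by
        rw [← ep_castSucc e, ← ep_castSucc e', he]
      exact congrArg Fin.val (Fin.castSucc_injective _ h2)
    simp [this]
  · intro σ
    set p := σ (Fin.last m) with hp
    have hτ : (Equiv.swap p (Fin.last m) * σ) (Fin.last m) = Fin.last m := by
      simp [Equiv.Perm.mul_apply, ← hp]
    refine ⟨⟨p, unep _ hτ⟩, ?_⟩
    simp only [ep_unep]
    rw [← mul_assoc, Equiv.swap_mul_self, one_mul]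

lemma ep_swap {m : ℕ} (a b : Fin m) :
    ep (Equiv.swap a b) = Equiv.swap a.castSucc b.castSucc := by
  ext x
  induction x using Fin.lastCases with
  | last =>
    rw [ep_last, Equiv.swap_apply_of_ne_of_ne (Fin.castSucc_lt_last a).ne'
      (Fin.castSucc_lt_last b).ne']
  | cast j =>
    rw [ep_castSucc]
    rcases eq_or_ne j a with rfl | ha
    · rw [Equiv.swap_apply_left, Equiv.swap_apply_left]
    rcases eq_or_ne j b with rfl | hb
    · rw [Equiv.swap_apply_right, Equiv.swap_apply_right]
    rw [Equiv.swap_apply_of_ne_of_ne ha hb,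
      Equiv.swap_apply_of_ne_of_ne (fun hc => ha (Fin.castSucc_injective _ hc))
        (fun hc => hb (Fin.castSucc_injective _ hc))]

section expand
variable {d n : ℕ} (S : (Fin (n + 2) → Fin d) → ℝ)
  (hanti : ∀ σ : Equiv.Perm (Fin (n + 2)),
      σ (Fin.last (n + 1)) = Fin.last (n + 1) →
      σ (Fin.castSucc (Fin.last n)) = Fin.castSucc (Fin.last n) →
      ∀ μ : Fin (n + 2) → Fin d, S (fun i => μ (σ i)) = sgn σ * S μ)

include hanti in
lemma expand (w : Fin (n + 2) → Fin d) :
    ((n : ℝ) + 1) * asymFirst S w =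
      S w - ∑ q : Fin n,
        S (w ∘ ⇑(Equiv.swap ((q.castSucc).castSucc) ((Fin.last n).castSucc))) := by
  have key : ∑ σ : Equiv.Perm (Fin (n + 1)),
      sgn σ * S (w ∘ Fin.snoc (Fin.castSucc ∘ ⇑σ) (Fin.last (n + 1)))
      = (Nat.factorial n : ℝ) * (S w - ∑ q : Fin n,
        S (w ∘ ⇑(Equiv.swap ((q.castSucc).castSucc) ((Fin.last n).castSucc)))) := by
    have step1 : ∀ pe : Fin (n + 1) × Equiv.Perm (Fin n),
        (fun pe' : Fin (n + 1) × Equiv.Perm (Fin n) => sgn (Equiv.swap pe'.1 (Fin.last n)) *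
            S (w ∘ ⇑(Equiv.swap pe'.1.castSucc (Fin.last n).castSucc))) pe
        = (fun σ : Equiv.Perm (Fin (n+1)) =>
          sgn σ * S (w ∘ Fin.snoc (Fin.castSucc ∘ ⇑σ) (Fin.last (n + 1))))
          (Equiv.swap pe.1 (Fin.last n) * ep pe.2) := by
      rintro ⟨p, e⟩
      simp only
      symm
      rw [← ep_coe, ep_mul, ← ep_swap]
      have harg : w ∘ ⇑(ep (Equiv.swap p (Fin.last n)) * ep (ep e))
          = fun i => (w ∘ ⇑(ep (Equiv.swap p (Fin.last n)))) ((ep (ep e)) i) := rfl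
      rw [harg, hanti (ep (ep e)) (ep_last _) (by rw [ep_castSucc, ep_last]) _]
      rw [sgn_mul, sgn_ep, sgn_ep, sgn_ep]
      linear_combination sgn (Equiv.swap p (Fin.last n)) *
        S (w ∘ ⇑(ep (Equiv.swap p (Fin.last n)))) * sgn_sq e
    rw [← Fintype.sum_bijective _ F_bij _ _ step1]
    rw [Fintype.sum_prod_type]
    simp only [Finset.sum_const, Finset.card_univ, Fintype.card_perm, Fintype.card_fin]
    rw [Fin.sum_univ_castSucc]
    simp only [Equiv.swap_self, sgn_one]
    have hone : sgn (Equiv.refl (Fin (n+1))) = 1 := sgn_one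
    have hswap : ∀ i : Fin n, sgn (Equiv.swap i.castSucc (Fin.last n)) = -1 :=
      fun i => sgn_swap (Fin.castSucc_lt_last i).ne
    simp only [hone, hswap, Equiv.coe_refl, Function.comp_id, one_mul, neg_one_mul,
      smul_neg, nsmul_eq_mul, Finset.sum_neg_distrib]
    rw [mul_sub, Finset.mul_sum]
    ring
  rw [asymFirst, key, Nat.factorial_succ]
  have h1 : (Nat.factorial n : ℝ) ≠ 0 := Nat.cast_ne_zero.mpr (Nat.factorial_ne_zero n)
  have h2 : ((n : ℝ) + 1) ≠ 0 := by positivity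
  field_simp
  push_cast
  ring
end expand

lemma swap_conj {α : Type*} [DecidableEq α] (f : Equiv.Perm α) (a b x : α) :
    Equiv.swap (f a) (f b) (f x) = f (Equiv.swap a b x) := by
  rw [Equiv.swap_apply_apply]
  simp [Equiv.Perm.mul_apply]

lemma cyc2 {α : Type*} [DecidableEq α] {a b c : α} (hab : a ≠ b) (hbc : b ≠ c) (hac : a ≠ c) :
    (Equiv.swap a b * Equiv.swap b c) * (Equiv.swap a b * Equiv.swap b c) =
      Equiv.swap b c * Equiv.swap a b := by
  ext x
  simp only [Equiv.Perm.mul_apply, Equiv.swap_apply_def]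
  split_ifs <;> simp_all

lemma cyc3 {α : Type*} [DecidableEq α] {a b c : α} (hab : a ≠ b) (hbc : b ≠ c) (hac : a ≠ c) :
    (Equiv.swap a b * Equiv.swap b c) * ((Equiv.swap a b * Equiv.swap b c) *
      (Equiv.swap a b * Equiv.swap b c)) = 1 := by
  rw [cyc2 hab hbc hac]
  rw [show (Equiv.swap a b * Equiv.swap b c) * (Equiv.swap b c * Equiv.swap a b)
      = Equiv.swap a b * (Equiv.swap b c * Equiv.swap b c) * Equiv.swap a b by
    simp [mul_assoc]]
  simp

/-- The 3-cycle of the contents of slot `p`, slot `n`, slot `n+1`. -/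
def gmaP {n : ℕ} (p : Fin (n + 2)) : Equiv.Perm (Fin (n + 2)) :=
  Equiv.swap p (Fin.castSucc (Fin.last n)) *
    Equiv.swap (Fin.castSucc (Fin.last n)) (Fin.last (n + 1))

/-- base slot `n-1`. -/
def pp (n : ℕ) : Fin (n + 2) := ⟨n - 1, by omega⟩

open Fin.NatCast in
lemma rot_mk {m : ℕ} (i a b : ℕ) (ha : a < m + 1) (hb : b < m + 1) (hi : i < m + 1)
    (h : a + i = b ∨ a + i = b + (m + 1)) :
    (finRotate (m + 1) ^ i) ⟨a, ha⟩ = ⟨b, hb⟩ := by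
  rw [rot_pow]
  apply Fin.ext
  simp only [Fin.add_def, Fin.val_natCast, Nat.mod_eq_of_lt hi]
  rcases h with h | h
  · rw [h, Nat.mod_eq_of_lt hb]
  · rw [h, Nat.add_mod_right, Nat.mod_eq_of_lt hb]

section bianchi
variable {d n : ℕ} (S : (Fin (n + 2) → Fin d) → ℝ)
  (hanti : ∀ σ : Equiv.Perm (Fin (n + 2)),
      σ (Fin.last (n + 1)) = Fin.last (n + 1) →
      σ (Fin.castSucc (Fin.last n)) = Fin.castSucc (Fin.last n) →
      ∀ μ : Fin (n + 2) → Fin d, S (fun i => μ (σ i)) = sgn σ * S μ)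
  (hsymm : ∀ μ : Fin (n + 2) → Fin d,
      S (μ ∘ Equiv.swap (Fin.castSucc (Fin.last n)) (Fin.last (n + 1))) = S μ)
  (hcyc : ∀ μ : Fin (n + 2) → Fin d,
      ∑ i ∈ Finset.range (n + 2),
        (-1 : ℝ) ^ (i * (n + 1)) * S (fun j => μ ((finRotate (n + 2) ^ i) j)) = 0)

include hanti hsymm in
lemma cancelPair (v : Fin (n + 2) → Fin d) (i : ℕ) (X Y A' B' : Fin (n + 2))
    (hA : (finRotate (n + 2) ^ i) A' = X) (hB : (finRotate (n + 2) ^ i) B' = Y)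
    (hab : A' ≠ B') (haN : A' ≠ Fin.castSucc (Fin.last n)) (haL : A' ≠ Fin.last (n + 1))
    (hbN : B' ≠ Fin.castSucc (Fin.last n)) (hbL : B' ≠ Fin.last (n + 1)) :
    S (fun j => (v ∘ ⇑(Equiv.swap X Y)) ((finRotate (n + 2) ^ i) j))
      = - S (fun j => v ((finRotate (n + 2) ^ i) j)) := by
  subst hA hB
  have h1 : (fun j => (v ∘ ⇑(Equiv.swap ((finRotate (n + 2) ^ i) A') ((finRotate (n + 2) ^ i) B')))
        ((finRotate (n + 2) ^ i) j))
      = fun j => v ((finRotate (n + 2) ^ i) (Equiv.swap A' B' j)) := by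
    funext j
    simp only [Function.comp_apply]
    rw [swap_conj]
  have h2 : (S fun j => v ((finRotate (n + 2) ^ i) (Equiv.swap A' B' j)))
      = sgn (Equiv.swap A' B') * S (fun j' => v ((finRotate (n + 2) ^ i) j')) :=
    hanti (Equiv.swap A' B')
      (Equiv.swap_apply_of_ne_of_ne (Ne.symm haL) (Ne.symm hbL))
      (Equiv.swap_apply_of_ne_of_ne (Ne.symm haN) (Ne.symm hbN))
      (fun j' => v ((finRotate (n + 2) ^ i) j'))
  rw [h1, h2, sgn_swap hab]
  ring

include hsymm in
lemma symmPair (v : Fin (n + 2) → Fin d) (i : ℕ) (X Y : Fin (n + 2))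
    (hA : (finRotate (n + 2) ^ i) (Fin.castSucc (Fin.last n)) = X)
    (hB : (finRotate (n + 2) ^ i) (Fin.last (n + 1)) = Y) :
    S (fun j => (v ∘ ⇑(Equiv.swap X Y)) ((finRotate (n + 2) ^ i) j))
      = S (fun j => v ((finRotate (n + 2) ^ i) j)) := by
  subst hA hB
  have h1 : (fun j => (v ∘ ⇑(Equiv.swap ((finRotate (n + 2) ^ i) (Fin.castSucc (Fin.last n)))
        ((finRotate (n + 2) ^ i) (Fin.last (n + 1))))) ((finRotate (n + 2) ^ i) j))
      = fun j => v ((finRotate (n + 2) ^ i)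
          (Equiv.swap (Fin.castSucc (Fin.last n)) (Fin.last (n + 1)) j)) := by
    funext j
    simp only [Function.comp_apply]
    rw [swap_conj]
  have h2 : (S fun j => v ((finRotate (n + 2) ^ i)
        (Equiv.swap (Fin.castSucc (Fin.last n)) (Fin.last (n + 1)) j)))
      = S (fun j' => v ((finRotate (n + 2) ^ i) j')) :=
    hsymm (fun j' => v ((finRotate (n + 2) ^ i) j'))
  rw [h1, h2]

include hanti hsymm hcyc in
lemma bianchi (hn : 1 ≤ n) (u : Fin (n + 2) → Fin d) :
    S u + S (u ∘ ⇑(gmaP (pp n))) + S (u ∘ ⇑(gmaP (pp n) * gmaP (pp n))) = 0 := by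
  rcases Nat.lt_or_ge n 2 with hn2 | hn2
  · -- n = 1
    obtain rfl : n = 1 := by omega
    have e := hcyc u
    rw [Finset.sum_range_succ, Finset.sum_range_succ, Finset.sum_range_succ,
      Finset.sum_range_zero] at e
    have h0 : (fun j : Fin 3 => u ((finRotate 3 ^ 0) j)) = u := by
      funext j; congr 1
    have hp1 : finRotate 3 ^ 1 = gmaP (pp 1) := by decide
    have hp2 : finRotate 3 ^ 2 = gmaP (pp 1) * gmaP (pp 1) := by decide
    have h1 : (fun j : Fin 3 => u ((finRotate 3 ^ 1) j)) = u ∘ ⇑(gmaP (pp 1)) := by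
      rw [hp1]; rfl
    have h2 : (fun j : Fin 3 => u ((finRotate 3 ^ 2) j)) = u ∘ ⇑(gmaP (pp 1) * gmaP (pp 1)) := by
      rw [hp2]; rfl
    rw [h0, h1, h2] at e
    norm_num [-Equiv.Perm.coe_mul] at e
    linarith
  · obtain ⟨k, rfl⟩ : ∃ k, n = k + 2 := ⟨n - 2, by omega⟩
    set γ := gmaP (pp (k + 2)) with hγdef
    set s := Equiv.swap (Fin.castSucc (Fin.last (k + 2))) (Fin.last (k + 2 + 1)) with hsdef
    set t := Equiv.swap (pp (k + 2)) (Fin.castSucc (Fin.last (k + 2))) with htdef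
    have hPN : pp (k + 2) ≠ Fin.castSucc (Fin.last (k + 2)) := by
      simp only [ne_eq, pp, Fin.ext_iff, Fin.coe_castSucc, Fin.val_last]; omega
    have hNL : Fin.castSucc (Fin.last (k + 2)) ≠ Fin.last (k + 2 + 1) := by
      simp only [ne_eq, Fin.ext_iff, Fin.coe_castSucc, Fin.val_last]; omega
    have hPL : pp (k + 2) ≠ Fin.last (k + 2 + 1) := by
      simp only [ne_eq, pp, Fin.ext_iff, Fin.val_last]; omega
    have hts : γ = t * s := rfl
    have hγs : γ * s = t := by
      rw [hts, mul_assoc, Equiv.swap_mul_self, mul_one]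
    have hγγ : γ * γ = s * t := by rw [hts]; exact cyc2 hPN hNL hPL
    have hγ3 : γ * (γ * γ) = 1 := by
      rw [hts]; exact cyc3 hPN hNL hPL
    have hγγs : γ * γ * s = γ * t := by rw [mul_assoc, hγs]
    have hst : γ * γ * t = s := by rw [hγγ, mul_assoc, Equiv.swap_mul_self, mul_one]
    have Etot : ∑ i ∈ Finset.range (k + 2 + 2),
        ((-1 : ℝ) ^ (i * (k + 2 + 1)) * S (fun j => u ((finRotate (k + 2 + 2) ^ i) j))
        + (-1 : ℝ) ^ (i * (k + 2 + 1)) * S (fun j => (u ∘ ⇑γ) ((finRotate (k + 2 + 2) ^ i) j))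
        + (-1 : ℝ) ^ (i * (k + 2 + 1)) * S (fun j => (u ∘ ⇑(γ * γ)) ((finRotate (k + 2 + 2) ^ i) j))
        + (-1 : ℝ) ^ (i * (k + 2 + 1)) * S (fun j => (u ∘ ⇑(γ * s)) ((finRotate (k + 2 + 2) ^ i) j))
        + (-1 : ℝ) ^ (i * (k + 2 + 1)) * S (fun j => (u ∘ ⇑(γ * γ * s)) ((finRotate (k + 2 + 2) ^ i) j))
        + (-1 : ℝ) ^ (i * (k + 2 + 1)) * S (fun j => (u ∘ ⇑s) ((finRotate (k + 2 + 2) ^ i) j))) = 0 := by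
      simp only [Finset.sum_add_distrib]
      rw [hcyc u, hcyc (u ∘ ⇑γ), hcyc (u ∘ ⇑(γ * γ)), hcyc (u ∘ ⇑(γ * s)),
        hcyc (u ∘ ⇑(γ * γ * s)), hcyc (u ∘ ⇑s)]
      norm_num
    -- middle indices vanish
    have hmid : ∀ i : ℕ, 1 ≤ i → i ≤ k + 2 →
        ((-1 : ℝ) ^ (i * (k + 2 + 1)) * S (fun j => u ((finRotate (k + 2 + 2) ^ i) j))
        + (-1 : ℝ) ^ (i * (k + 2 + 1)) * S (fun j => (u ∘ ⇑γ) ((finRotate (k + 2 + 2) ^ i) j))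
        + (-1 : ℝ) ^ (i * (k + 2 + 1)) * S (fun j => (u ∘ ⇑(γ * γ)) ((finRotate (k + 2 + 2) ^ i) j))
        + (-1 : ℝ) ^ (i * (k + 2 + 1)) * S (fun j => (u ∘ ⇑(γ * s)) ((finRotate (k + 2 + 2) ^ i) j))
        + (-1 : ℝ) ^ (i * (k + 2 + 1)) * S (fun j => (u ∘ ⇑(γ * γ * s)) ((finRotate (k + 2 + 2) ^ i) j))
        + (-1 : ℝ) ^ (i * (k + 2 + 1)) * S (fun j => (u ∘ ⇑s) ((finRotate (k + 2 + 2) ^ i) j))) = 0 := by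
      intro i hi1 hi2
      rcases Nat.lt_or_ge i 2 with hi | hi
      · -- i = 1 : pair via t
        obtain rfl : i = 1 := by omega
        have hA : (finRotate (k + 2 + 2) ^ 1) (⟨k, by omega⟩ : Fin (k + 2 + 2)) = pp (k + 2) := by
          have := rot_mk (m := k + 3) 1 k (k + 1) (by omega) (by omega) (by omega) (by omega)
          exact this.trans (by apply Fin.ext; simp [pp])
        have hB : (finRotate (k + 2 + 2) ^ 1) (⟨k + 1, by omega⟩ : Fin (k + 2 + 2))
            = Fin.castSucc (Fin.last (k + 2)) := by
          have := rot_mk (m := k + 3) 1 (k + 1) (k + 2) (by omega) (by omega) (by omega) (by omega)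
          exact this.trans (by apply Fin.ext; simp)
        have dab : (⟨k, by omega⟩ : Fin (k + 2 + 2)) ≠ ⟨k + 1, by omega⟩ := by
          simp only [ne_eq, Fin.ext_iff]; omega
        have daN : (⟨k, by omega⟩ : Fin (k + 2 + 2)) ≠ Fin.castSucc (Fin.last (k + 2)) := by
          simp only [ne_eq, Fin.ext_iff, Fin.coe_castSucc, Fin.val_last]; omega
        have daL : (⟨k, by omega⟩ : Fin (k + 2 + 2)) ≠ Fin.last (k + 2 + 1) := by
          simp only [ne_eq, Fin.ext_iff, Fin.coe_castSucc, Fin.val_last]; omega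
        have dbN : (⟨k + 1, by omega⟩ : Fin (k + 2 + 2)) ≠ Fin.castSucc (Fin.last (k + 2)) := by
          simp only [ne_eq, Fin.ext_iff, Fin.coe_castSucc, Fin.val_last]; omega
        have dbL : (⟨k + 1, by omega⟩ : Fin (k + 2 + 2)) ≠ Fin.last (k + 2 + 1) := by
          simp only [ne_eq, Fin.ext_iff, Fin.coe_castSucc, Fin.val_last]; omega
        have c1 : S (fun j => (u ∘ ⇑(γ * s)) ((finRotate (k + 2 + 2) ^ 1) j))
            = - S (fun j => u ((finRotate (k + 2 + 2) ^ 1) j)) := by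
          rw [show u ∘ ⇑(γ * s) = u ∘ ⇑t by rw [hγs]]
          exact cancelPair S hanti hsymm u 1 _ _ _ _ hA hB dab daN daL dbN dbL
        have c2 : S (fun j => (u ∘ ⇑(γ * γ * s)) ((finRotate (k + 2 + 2) ^ 1) j))
            = - S (fun j => (u ∘ ⇑γ) ((finRotate (k + 2 + 2) ^ 1) j)) := by
          rw [show u ∘ ⇑(γ * γ * s) = (u ∘ ⇑γ) ∘ ⇑t by
            rw [hγγs, Equiv.Perm.coe_mul]; rfl]
          exact cancelPair S hanti hsymm (u ∘ ⇑γ) 1 _ _ _ _ hA hB dab daN daL dbN dbL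
        have c3 : S (fun j => (u ∘ ⇑s) ((finRotate (k + 2 + 2) ^ 1) j))
            = - S (fun j => (u ∘ ⇑(γ * γ)) ((finRotate (k + 2 + 2) ^ 1) j)) := by
          rw [show u ∘ ⇑s = (u ∘ ⇑(γ * γ)) ∘ ⇑t by
            rw [← hst, Equiv.Perm.coe_mul]; rfl]
          exact cancelPair S hanti hsymm (u ∘ ⇑(γ * γ)) 1 _ _ _ _ hA hB dab daN daL dbN dbL
        rw [c1, c2, c3]
        ring
      · -- 2 ≤ i ≤ k+2 : pair via s
        have hA : (finRotate (k + 2 + 2) ^ i) (⟨k + 2 - i, by omega⟩ : Fin (k + 2 + 2))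
            = Fin.castSucc (Fin.last (k + 2)) := by
          have := rot_mk (m := k + 3) i (k + 2 - i) (k + 2) (by omega) (by omega) (by omega)
            (by omega)
          exact this.trans (by apply Fin.ext; simp)
        have hB : (finRotate (k + 2 + 2) ^ i) (⟨k + 3 - i, by omega⟩ : Fin (k + 2 + 2))
            = Fin.last (k + 2 + 1) := by
          have := rot_mk (m := k + 3) i (k + 3 - i) (k + 3) (by omega) (by omega) (by omega)
            (by omega)
          exact this.trans (by apply Fin.ext; simp)
        have dab : (⟨k + 2 - i, by omega⟩ : Fin (k + 2 + 2)) ≠ ⟨k + 3 - i, by omega⟩ := by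
          simp only [ne_eq, Fin.ext_iff, Fin.coe_castSucc, Fin.val_last]; omega
        have daN : (⟨k + 2 - i, by omega⟩ : Fin (k + 2 + 2)) ≠ Fin.castSucc (Fin.last (k + 2)) := by
          simp only [ne_eq, Fin.ext_iff, Fin.coe_castSucc, Fin.val_last]; omega
        have daL : (⟨k + 2 - i, by omega⟩ : Fin (k + 2 + 2)) ≠ Fin.last (k + 2 + 1) := by
          simp only [ne_eq, Fin.ext_iff, Fin.coe_castSucc, Fin.val_last]; omega
        have dbN : (⟨k + 3 - i, by omega⟩ : Fin (k + 2 + 2)) ≠ Fin.castSucc (Fin.last (k + 2)) := by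
          simp only [ne_eq, Fin.ext_iff, Fin.coe_castSucc, Fin.val_last]; omega
        have dbL : (⟨k + 3 - i, by omega⟩ : Fin (k + 2 + 2)) ≠ Fin.last (k + 2 + 1) := by
          simp only [ne_eq, Fin.ext_iff, Fin.coe_castSucc, Fin.val_last]; omega
        have c1 : S (fun j => (u ∘ ⇑s) ((finRotate (k + 2 + 2) ^ i) j))
            = - S (fun j => u ((finRotate (k + 2 + 2) ^ i) j)) :=
          cancelPair S hanti hsymm u i _ _ _ _ hA hB dab daN daL dbN dbL
        have c2 : S (fun j => (u ∘ ⇑(γ * s)) ((finRotate (k + 2 + 2) ^ i) j))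
            = - S (fun j => (u ∘ ⇑γ) ((finRotate (k + 2 + 2) ^ i) j)) := by
          rw [show u ∘ ⇑(γ * s) = (u ∘ ⇑γ) ∘ ⇑s by rw [Equiv.Perm.coe_mul]; rfl]
          exact cancelPair S hanti hsymm (u ∘ ⇑γ) i _ _ _ _ hA hB dab daN daL dbN dbL
        have c3 : S (fun j => (u ∘ ⇑(γ * γ * s)) ((finRotate (k + 2 + 2) ^ i) j))
            = - S (fun j => (u ∘ ⇑(γ * γ)) ((finRotate (k + 2 + 2) ^ i) j)) := by
          rw [show u ∘ ⇑(γ * γ * s) = (u ∘ ⇑(γ * γ)) ∘ ⇑s by rw [Equiv.Perm.coe_mul]; rfl]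
          exact cancelPair S hanti hsymm (u ∘ ⇑(γ * γ)) i _ _ _ _ hA hB dab daN daL dbN dbL
        rw [c1, c2, c3]
        ring
    -- i = 0 : gives 2 * B
    have hzero :
        ((-1 : ℝ) ^ (0 * (k + 2 + 1)) * S (fun j => u ((finRotate (k + 2 + 2) ^ 0) j))
        + (-1 : ℝ) ^ (0 * (k + 2 + 1)) * S (fun j => (u ∘ ⇑γ) ((finRotate (k + 2 + 2) ^ 0) j))
        + (-1 : ℝ) ^ (0 * (k + 2 + 1)) * S (fun j => (u ∘ ⇑(γ * γ)) ((finRotate (k + 2 + 2) ^ 0) j))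
        + (-1 : ℝ) ^ (0 * (k + 2 + 1)) * S (fun j => (u ∘ ⇑(γ * s)) ((finRotate (k + 2 + 2) ^ 0) j))
        + (-1 : ℝ) ^ (0 * (k + 2 + 1)) * S (fun j => (u ∘ ⇑(γ * γ * s)) ((finRotate (k + 2 + 2) ^ 0) j))
        + (-1 : ℝ) ^ (0 * (k + 2 + 1)) * S (fun j => (u ∘ ⇑s) ((finRotate (k + 2 + 2) ^ 0) j)))
        = 2 * (S u + S (u ∘ ⇑γ) + S (u ∘ ⇑(γ * γ))) := by
      have hA0 : (finRotate (k + 2 + 2) ^ 0) (Fin.castSucc (Fin.last (k + 2)))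
          = Fin.castSucc (Fin.last (k + 2)) := by simp
      have hB0 : (finRotate (k + 2 + 2) ^ 0) (Fin.last (k + 2 + 1)) = Fin.last (k + 2 + 1) := by
        simp
      have c1 : S (fun j => (u ∘ ⇑s) ((finRotate (k + 2 + 2) ^ 0) j))
          = S (fun j => u ((finRotate (k + 2 + 2) ^ 0) j)) :=
        symmPair S hsymm u 0 _ _ hA0 hB0
      have c2 : S (fun j => (u ∘ ⇑(γ * s)) ((finRotate (k + 2 + 2) ^ 0) j))
          = S (fun j => (u ∘ ⇑γ) ((finRotate (k + 2 + 2) ^ 0) j)) :=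
        symmPair S hsymm (u ∘ ⇑γ) 0 _ _ hA0 hB0
      have c3 : S (fun j => (u ∘ ⇑(γ * γ * s)) ((finRotate (k + 2 + 2) ^ 0) j))
          = S (fun j => (u ∘ ⇑(γ * γ)) ((finRotate (k + 2 + 2) ^ 0) j)) :=
        symmPair S hsymm (u ∘ ⇑(γ * γ)) 0 _ _ hA0 hB0
      have t1 : S (fun j => u ((finRotate (k + 2 + 2) ^ 0) j)) = S u := rfl
      have t2 : S (fun j => (u ∘ ⇑γ) ((finRotate (k + 2 + 2) ^ 0) j)) = S (u ∘ ⇑γ) := rfl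
      have t3 : S (fun j => (u ∘ ⇑(γ * γ)) ((finRotate (k + 2 + 2) ^ 0) j))
          = S (u ∘ ⇑(γ * γ)) := rfl
      rw [c1, c2, c3, t1, t2, t3]
      norm_num
      ring
    -- gamma application facts
    have hγP : γ (pp (k + 2)) = Fin.castSucc (Fin.last (k + 2)) := by
      rw [hts, Equiv.Perm.mul_apply, hsdef, htdef,
        Equiv.swap_apply_of_ne_of_ne hPN hPL, Equiv.swap_apply_left]
    have hγN : γ (Fin.castSucc (Fin.last (k + 2))) = Fin.last (k + 2 + 1) := by
      rw [hts, Equiv.Perm.mul_apply, hsdef, htdef, Equiv.swap_apply_left,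
        Equiv.swap_apply_of_ne_of_ne (Ne.symm hPL) (Ne.symm hNL)]
    have hγL : γ (Fin.last (k + 2 + 1)) = pp (k + 2) := by
      rw [hts, Equiv.Perm.mul_apply, hsdef, htdef, Equiv.swap_apply_right,
        Equiv.swap_apply_right]
    have hγblock : ∀ y : Fin (k + 2 + 2), y.val < k + 1 → γ y = y := by
      intro y hy
      have h1 : s y = y := Equiv.swap_apply_of_ne_of_ne
        (Fin.ne_of_val_ne (by simp only [Fin.coe_castSucc, Fin.val_last]; omega))
        (Fin.ne_of_val_ne (by simp only [Fin.val_last]; omega))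
      have h2 : t y = y := Equiv.swap_apply_of_ne_of_ne
        (Fin.ne_of_val_ne (by simp only [pp]; omega))
        (Fin.ne_of_val_ne (by simp only [Fin.coe_castSucc, Fin.val_last]; omega))
      rw [hts, Equiv.Perm.mul_apply, h1, h2]
    -- the block rotation
    set ρ := (finRotate (k + 2))⁻¹ with hρdef
    have hρ0 : ρ (0 : Fin (k + 2)) = Fin.last (k + 1) := by
      rw [hρdef, Equiv.Perm.inv_def, Equiv.symm_apply_eq, finRotate_succ_apply]
      exact (Fin.last_add_one (k + 1)).symm
    have hρs : ∀ j : Fin (k + 1), ρ j.succ = j.castSucc := by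
      intro j
      rw [hρdef, Equiv.Perm.inv_def, Equiv.symm_apply_eq, finRotate_succ_apply]
      apply Fin.ext
      simp only [Fin.val_succ, Fin.add_def, Fin.coe_castSucc, Fin.val_one]
      rw [Nat.mod_eq_of_lt (by omega)]
    have hcore : ∀ x : Fin (k + 2 + 2),
        γ (γ (ep (ep ρ) x)) = (finRotate (k + 2 + 2) ^ (k + 2 + 1)) x := by
      intro x
      induction x using Fin.lastCases with
      | last =>
        have hL : γ (γ (ep (ep ρ) (Fin.last (k + 2 + 1)))) = Fin.castSucc (Fin.last (k + 2)) := by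
          rw [ep_last, hγL, hγP]
        have hRr : (finRotate (k + 2 + 2) ^ (k + 2 + 1)) (Fin.last (k + 2 + 1))
            = Fin.castSucc (Fin.last (k + 2)) := by
          rw [show (Fin.last (k + 2 + 1) : Fin (k + 2 + 2)) = ⟨k + 3, by omega⟩ from
            Fin.ext (by simp)]
          exact (rot_mk (m := k + 3) (k + 2 + 1) (k + 3) (k + 2) (by omega) (by omega)
            (by omega) (by omega)).trans (Fin.ext (by simp))
        rw [hL, hRr]
      | cast y =>
        induction y using Fin.lastCases with
        | last =>
          have hL : γ (γ (ep (ep ρ) (Fin.castSucc (Fin.last (k + 2))))) = pp (k + 2) := by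
            rw [ep_castSucc, ep_last, hγN, hγL]
          have hRr : (finRotate (k + 2 + 2) ^ (k + 2 + 1)) (Fin.castSucc (Fin.last (k + 2)))
              = pp (k + 2) := by
            rw [show (Fin.castSucc (Fin.last (k + 2)) : Fin (k + 2 + 2)) = ⟨k + 2, by omega⟩ from
              Fin.ext (by simp)]
            exact (rot_mk (m := k + 3) (k + 2 + 1) (k + 2) (k + 1) (by omega) (by omega)
              (by omega) (by omega)).trans (Fin.ext (by simp [pp]))
          rw [hL, hRr]
        | cast q =>
          induction q using Fin.cases with
          | zero =>
            have hL : γ (γ (ep (ep ρ) (Fin.castSucc (Fin.castSucc (0 : Fin (k + 2))))))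
                = Fin.last (k + 2 + 1) := by
              rw [ep_castSucc, ep_castSucc, hρ0,
                show (Fin.castSucc (Fin.castSucc (Fin.last (k + 1))) : Fin (k + 2 + 2))
                  = pp (k + 2) from Fin.ext (by simp [pp]), hγP, hγN]
            have hRr : (finRotate (k + 2 + 2) ^ (k + 2 + 1))
                (Fin.castSucc (Fin.castSucc (0 : Fin (k + 2)))) = Fin.last (k + 2 + 1) := by
              rw [show (Fin.castSucc (Fin.castSucc (0 : Fin (k + 2))) : Fin (k + 2 + 2))
                = ⟨0, by omega⟩ from Fin.ext (by simp)]
              exact (rot_mk (m := k + 3) (k + 2 + 1) 0 (k + 3) (by omega) (by omega)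
                (by omega) (by omega)).trans (Fin.ext (by simp))
            rw [hL, hRr]
          | succ j =>
            have hL : γ (γ (ep (ep ρ) (Fin.castSucc (Fin.castSucc j.succ))))
                = Fin.castSucc (Fin.castSucc j.castSucc) := by
              rw [ep_castSucc, ep_castSucc, hρs j,
                hγblock (Fin.castSucc (Fin.castSucc j.castSucc))
                  (by simp only [Fin.coe_castSucc]; omega),
                hγblock (Fin.castSucc (Fin.castSucc j.castSucc))
                  (by simp only [Fin.coe_castSucc]; omega)]
            have hRr : (finRotate (k + 2 + 2) ^ (k + 2 + 1))
                (Fin.castSucc (Fin.castSucc j.succ)) = Fin.castSucc (Fin.castSucc j.castSucc) := by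
              rw [show (Fin.castSucc (Fin.castSucc j.succ) : Fin (k + 2 + 2))
                = ⟨j.val + 1, by omega⟩ from Fin.ext (by simp)]
              exact (rot_mk (m := k + 3) (k + 2 + 1) (j.val + 1) j.val (by omega) (by omega)
                (by omega) (by omega)).trans (Fin.ext (by simp))
            rw [hL, hRr]
    have rotdown : ∀ v : Fin (k + 2 + 2) → Fin d,
        S (fun j => v ((finRotate (k + 2 + 2) ^ (k + 2 + 1)) j))
          = (-1 : ℝ) ^ (k + 1) * S (fun x => v (γ (γ x))) := by
      intro v
      have h1 : (fun j => v ((finRotate (k + 2 + 2) ^ (k + 2 + 1)) j))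
          = fun j => v (γ (γ (ep (ep ρ) j))) := by
        funext j
        rw [← hcore j]
      have h2 : (S fun j => v (γ (γ (ep (ep ρ) j))))
          = sgn (ep (ep ρ)) * S (fun x => v (γ (γ x))) :=
        hanti (ep (ep ρ)) (ep_last _) (by rw [ep_castSucc, ep_last]) (fun x => v (γ (γ x)))
      have h3 : sgn (ep (ep ρ)) = (-1 : ℝ) ^ (k + 1) := by
        rw [sgn_ep, sgn_ep, hρdef]
        simp [sgn, sign_finRotate]
      rw [h1, h2, h3]
    have hc : (-1 : ℝ) ^ ((k + 2 + 1) * (k + 2 + 1)) * (-1 : ℝ) ^ (k + 1) = 1 := by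
      rw [← pow_add]
      apply Even.neg_one_pow
      rcases Nat.even_or_odd k with ⟨m, hm⟩ | ⟨m, hm⟩
      · exact ⟨2*m*m + 7*m + 5, by subst hm; ring⟩
      · exact ⟨2*m*m + 9*m + 9, by subst hm; ring⟩
    -- the top index i = k+3
    have htop :
        ((-1 : ℝ) ^ ((k + 2 + 1) * (k + 2 + 1)) * S (fun j => u ((finRotate (k + 2 + 2) ^ (k + 2 + 1)) j))
        + (-1 : ℝ) ^ ((k + 2 + 1) * (k + 2 + 1)) * S (fun j => (u ∘ ⇑γ) ((finRotate (k + 2 + 2) ^ (k + 2 + 1)) j))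
        + (-1 : ℝ) ^ ((k + 2 + 1) * (k + 2 + 1)) * S (fun j => (u ∘ ⇑(γ * γ)) ((finRotate (k + 2 + 2) ^ (k + 2 + 1)) j))
        + (-1 : ℝ) ^ ((k + 2 + 1) * (k + 2 + 1)) * S (fun j => (u ∘ ⇑(γ * s)) ((finRotate (k + 2 + 2) ^ (k + 2 + 1)) j))
        + (-1 : ℝ) ^ ((k + 2 + 1) * (k + 2 + 1)) * S (fun j => (u ∘ ⇑(γ * γ * s)) ((finRotate (k + 2 + 2) ^ (k + 2 + 1)) j))
        + (-1 : ℝ) ^ ((k + 2 + 1) * (k + 2 + 1)) * S (fun j => (u ∘ ⇑s) ((finRotate (k + 2 + 2) ^ (k + 2 + 1)) j)))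
        = 2 * (S u + S (u ∘ ⇑γ) + S (u ∘ ⇑(γ * γ))) := by
      have hA : (finRotate (k + 2 + 2) ^ (k + 2 + 1)) (Fin.castSucc (Fin.last (k + 2)))
          = pp (k + 2) := by
        rw [show (Fin.castSucc (Fin.last (k + 2)) : Fin (k + 2 + 2)) = ⟨k + 2, by omega⟩ from
          Fin.ext (by simp)]
        exact (rot_mk (m := k + 3) (k + 2 + 1) (k + 2) (k + 1) (by omega) (by omega)
          (by omega) (by omega)).trans (Fin.ext (by simp [pp]))
      have hB : (finRotate (k + 2 + 2) ^ (k + 2 + 1)) (Fin.last (k + 2 + 1))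
          = Fin.castSucc (Fin.last (k + 2)) := by
        rw [show (Fin.last (k + 2 + 1) : Fin (k + 2 + 2)) = ⟨k + 3, by omega⟩ from
          Fin.ext (by simp)]
        exact (rot_mk (m := k + 3) (k + 2 + 1) (k + 3) (k + 2) (by omega) (by omega)
          (by omega) (by omega)).trans (Fin.ext (by simp))
      have c1 : S (fun j => (u ∘ ⇑(γ * s)) ((finRotate (k + 2 + 2) ^ (k + 2 + 1)) j))
          = S (fun j => u ((finRotate (k + 2 + 2) ^ (k + 2 + 1)) j)) := by
        rw [show u ∘ ⇑(γ * s) = u ∘ ⇑t by rw [hγs]]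
        exact symmPair S hsymm u (k + 2 + 1) _ _ hA hB
      have c2 : S (fun j => (u ∘ ⇑(γ * γ * s)) ((finRotate (k + 2 + 2) ^ (k + 2 + 1)) j))
          = S (fun j => (u ∘ ⇑γ) ((finRotate (k + 2 + 2) ^ (k + 2 + 1)) j)) := by
        rw [show u ∘ ⇑(γ * γ * s) = (u ∘ ⇑γ) ∘ ⇑t by rw [hγγs, Equiv.Perm.coe_mul]; rfl]
        exact symmPair S hsymm (u ∘ ⇑γ) (k + 2 + 1) _ _ hA hB
      have c3 : S (fun j => (u ∘ ⇑s) ((finRotate (k + 2 + 2) ^ (k + 2 + 1)) j))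
          = S (fun j => (u ∘ ⇑(γ * γ)) ((finRotate (k + 2 + 2) ^ (k + 2 + 1)) j)) := by
        rw [show u ∘ ⇑s = (u ∘ ⇑(γ * γ)) ∘ ⇑t by rw [← hst, Equiv.Perm.coe_mul]; rfl]
        exact symmPair S hsymm (u ∘ ⇑(γ * γ)) (k + 2 + 1) _ _ hA hB
      have r1 : S (fun j => u ((finRotate (k + 2 + 2) ^ (k + 2 + 1)) j))
          = (-1 : ℝ) ^ (k + 1) * S (u ∘ ⇑(γ * γ)) := by
        have h := rotdown u
        rw [show (fun x => u (γ (γ x))) = u ∘ ⇑(γ * γ) from funext fun x => by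
          simp only [Function.comp_apply, Equiv.Perm.mul_apply]] at h
        exact h
      have r2 : S (fun j => (u ∘ ⇑γ) ((finRotate (k + 2 + 2) ^ (k + 2 + 1)) j))
          = (-1 : ℝ) ^ (k + 1) * S u := by
        have h := rotdown (u ∘ ⇑γ)
        rw [show (fun x => (u ∘ ⇑γ) (γ (γ x))) = u from funext fun x => by
          simp only [Function.comp_apply]
          rw [show γ (γ (γ x)) = (γ * (γ * γ)) x by
            simp only [Equiv.Perm.mul_apply], hγ3, Equiv.Perm.one_apply]] at h
        exact h
      have r3 : S (fun j => (u ∘ ⇑(γ * γ)) ((finRotate (k + 2 + 2) ^ (k + 2 + 1)) j))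
          = (-1 : ℝ) ^ (k + 1) * S (u ∘ ⇑γ) := by
        have h := rotdown (u ∘ ⇑(γ * γ))
        rw [show (fun x => (u ∘ ⇑(γ * γ)) (γ (γ x))) = u ∘ ⇑γ from funext fun x => by
          simp only [Function.comp_apply, Equiv.Perm.mul_apply]
          rw [show γ (γ (γ (γ x))) = γ ((γ * (γ * γ)) x) by
            simp only [Equiv.Perm.mul_apply], hγ3, Equiv.Perm.one_apply]] at h
        exact h
      rw [c1, c2, c3, r1, r2, r3]
      linear_combination (2 * (S u + S (u ∘ ⇑γ) + S (u ∘ ⇑(γ * γ)))) * hc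
    rw [Finset.sum_range_succ, Finset.sum_range_succ'] at Etot
    rw [Finset.sum_eq_zero (fun i hi => hmid (i + 1) (by omega)
      (by have := Finset.mem_range.mp hi; omega))] at Etot
    rw [hzero, htop] at Etot
    linarith

include hanti hsymm hcyc in
lemma bianchi_gen (hn : 1 ≤ n) (q : Fin n) (u : Fin (n + 2) → Fin d) :
    S u + S (u ∘ ⇑(gmaP (Fin.castSucc (Fin.castSucc q))))
      + S (u ∘ ⇑(gmaP (Fin.castSucc (Fin.castSucc q)) * gmaP (Fin.castSucc (Fin.castSucc q))))
      = 0 := by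
  set β := Equiv.swap (Fin.castSucc (Fin.castSucc q)) (pp n) with hβdef
  have hqN : Fin.castSucc (Fin.castSucc q) ≠ Fin.castSucc (Fin.last n) := by
    simp only [ne_eq, Fin.ext_iff, Fin.coe_castSucc, Fin.val_last]; omega
  have hqL : Fin.castSucc (Fin.castSucc q) ≠ Fin.last (n + 1) := by
    simp only [ne_eq, Fin.ext_iff, Fin.coe_castSucc, Fin.val_last]; omega
  have hPN : pp n ≠ Fin.castSucc (Fin.last n) := by
    simp only [ne_eq, pp, Fin.ext_iff, Fin.coe_castSucc, Fin.val_last]; omega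
  have hPL : pp n ≠ Fin.last (n + 1) := by
    simp only [ne_eq, pp, Fin.ext_iff, Fin.val_last]; omega
  have hβN : β (Fin.castSucc (Fin.last n)) = Fin.castSucc (Fin.last n) :=
    Equiv.swap_apply_of_ne_of_ne (Ne.symm hqN) (Ne.symm hPN)
  have hβL : β (Fin.last (n + 1)) = Fin.last (n + 1) :=
    Equiv.swap_apply_of_ne_of_ne (Ne.symm hqL) (Ne.symm hPL)
  have hβP : β (pp n) = Fin.castSucc (Fin.castSucc q) := Equiv.swap_apply_right _ _
  have hββ : β * β = 1 := Equiv.swap_mul_self _ _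
  have hβX : ∀ X : Equiv.Perm (Fin (n + 2)), β * (β * X) = X := fun X => by
    rw [← mul_assoc, hββ, one_mul]
  have h1 : Equiv.swap (Fin.castSucc (Fin.castSucc q)) (Fin.castSucc (Fin.last n))
      = β * Equiv.swap (pp n) (Fin.castSucc (Fin.last n)) * β := by
    have h := Equiv.swap_apply_apply β (pp n) (Fin.castSucc (Fin.last n))
    rw [hβP, hβN, Equiv.swap_inv] at h
    exact h
  have h2 : Equiv.swap (Fin.castSucc (Fin.last n)) (Fin.last (n + 1))
      = β * Equiv.swap (Fin.castSucc (Fin.last n)) (Fin.last (n + 1)) * β := by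
    have h := Equiv.swap_apply_apply β (Fin.castSucc (Fin.last n)) (Fin.last (n + 1))
    rw [hβN, hβL, Equiv.swap_inv] at h
    exact h
  have hγq : gmaP (Fin.castSucc (Fin.castSucc q)) = β * gmaP (pp n) * β := by
    have expand1 : β * gmaP (pp n) * β
        = (β * Equiv.swap (pp n) (Fin.castSucc (Fin.last n)) * β) *
          (β * Equiv.swap (Fin.castSucc (Fin.last n)) (Fin.last (n + 1)) * β) := by
      rw [gmaP]
      simp only [mul_assoc]
      rw [hβX]
    rw [expand1, ← h1, ← h2, gmaP]
  have hγq2 : gmaP (Fin.castSucc (Fin.castSucc q)) * gmaP (Fin.castSucc (Fin.castSucc q))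
      = β * (gmaP (pp n) * gmaP (pp n)) * β := by
    rw [hγq]
    simp only [mul_assoc]
    rw [hβX]
  have e0 : S (u ∘ ⇑β) = sgn β * S u := hanti β hβL hβN u
  have t2 : S (u ∘ ⇑(gmaP (Fin.castSucc (Fin.castSucc q))))
      = sgn β * S ((u ∘ ⇑β) ∘ ⇑(gmaP (pp n))) := by
    have harg : u ∘ ⇑(gmaP (Fin.castSucc (Fin.castSucc q)))
        = fun i => ((u ∘ ⇑β) ∘ ⇑(gmaP (pp n))) (β i) := funext fun i => by
      rw [hγq]; simp [Equiv.Perm.mul_apply]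
    rw [harg]
    exact hanti β hβL hβN ((u ∘ ⇑β) ∘ ⇑(gmaP (pp n)))
  have t3 : S (u ∘ ⇑(gmaP (Fin.castSucc (Fin.castSucc q)) * gmaP (Fin.castSucc (Fin.castSucc q))))
      = sgn β * S ((u ∘ ⇑β) ∘ ⇑(gmaP (pp n) * gmaP (pp n))) := by
    have harg : u ∘ ⇑(gmaP (Fin.castSucc (Fin.castSucc q)) * gmaP (Fin.castSucc (Fin.castSucc q)))
        = fun i => ((u ∘ ⇑β) ∘ ⇑(gmaP (pp n) * gmaP (pp n))) (β i) := funext fun i => by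
      rw [hγq2]; simp [Equiv.Perm.mul_apply]
    rw [harg]
    exact hanti β hβL hβN ((u ∘ ⇑β) ∘ ⇑(gmaP (pp n) * gmaP (pp n)))
  have bb := bianchi S hanti hsymm hcyc hn (u ∘ ⇑β)
  have hsq := sgn_sq β
  rw [t2, t3]
  linear_combination sgn β * bb - sgn β * e0 - S u * hsq
end bianchi

/-- (Lemma 4 of the paper.)  Let `d ≥ 1`, `n ≥ 1`, and let
`S : (Fin (n+2) → Fin d) → ℝ` satisfy the G-condition of degree `n+1`: antisymmetric in its
first `n` indices (permutations fixing the last two slots), symmetric in its last two indices,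
and satisfying the cyclic relation `∑_{i=0}^{n+1} (−1)^{i(n+1)} S(μ ∘ τ^i) = 0`, where `τ` is
the cyclic permutation of the `n+2` index slots.  Then
`S(μ₁,…,μ_n,ν,λ) = ((n+1)/(n+2)) · (S_{[μ₁⋯μ_n ν]λ} + S_{[μ₁⋯μ_n λ]ν})`. -/
theorem stmt4 (d n : ℕ) (hd : 1 ≤ d) (hn : 1 ≤ n)
    (S : (Fin (n + 2) → Fin d) → ℝ)
    -- antisymmetry in the first `n` indices:
    (hanti : ∀ σ : Equiv.Perm (Fin (n + 2)),
      σ (Fin.last (n + 1)) = Fin.last (n + 1) →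
      σ (Fin.castSucc (Fin.last n)) = Fin.castSucc (Fin.last n) →
      ∀ μ : Fin (n + 2) → Fin d, S (fun i => μ (σ i)) = sgn σ * S μ)
    -- symmetry in the last two indices:
    (hsymm : ∀ μ : Fin (n + 2) → Fin d,
      S (μ ∘ Equiv.swap (Fin.castSucc (Fin.last n)) (Fin.last (n + 1))) = S μ)
    -- the cyclic relation:
    (hcyc : ∀ μ : Fin (n + 2) → Fin d,
      ∑ i ∈ Finset.range (n + 2),
        (-1 : ℝ) ^ (i * (n + 1)) * S (fun j => μ ((finRotate (n + 2) ^ i) j)) = 0) :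
    ∀ (μ : Fin n → Fin d) (ν lam : Fin d),
      S (Fin.snoc (Fin.snoc μ ν) lam) =
        (((n : ℝ) + 1) / ((n : ℝ) + 2)) *
          (asymFirst S (Fin.snoc (Fin.snoc μ ν) lam) +
           asymFirst S (Fin.snoc (Fin.snoc μ lam) ν)) := by
  intro μ ν lam
  set w : Fin (n + 2) → Fin d := Fin.snoc (Fin.snoc μ ν) lam with hw
  set w' : Fin (n + 2) → Fin d := Fin.snoc (Fin.snoc μ lam) ν with hw'
  have hws : w' = w ∘ ⇑(Equiv.swap (Fin.castSucc (Fin.last n)) (Fin.last (n + 1))) := by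
    funext j
    induction j using Fin.lastCases with
    | last =>
      simp only [hw, hw', Function.comp_apply, Equiv.swap_apply_right, Fin.snoc_last,
        Fin.snoc_castSucc]
    | cast i =>
      induction i using Fin.lastCases with
      | last =>
        simp only [hw, hw', Function.comp_apply, Equiv.swap_apply_left, Fin.snoc_last,
          Fin.snoc_castSucc]
      | cast p =>
        have hne1 : Fin.castSucc (Fin.castSucc p) ≠ Fin.castSucc (Fin.last n) := by
          simp only [ne_eq, Fin.ext_iff, Fin.coe_castSucc, Fin.val_last]; omega
        have hne2 : Fin.castSucc (Fin.castSucc p) ≠ Fin.last (n + 1) := by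
          simp only [ne_eq, Fin.ext_iff, Fin.coe_castSucc, Fin.val_last]; omega
        simp only [hw, hw', Function.comp_apply,
          Equiv.swap_apply_of_ne_of_ne hne1 hne2, Fin.snoc_castSucc]
  have hSw : S w' = S w := by rw [hws]; exact hsymm w
  have e1 := expand S hanti w
  have e2 := expand S hanti w'
  have hq : ∀ q : Fin n,
      S (w ∘ ⇑(Equiv.swap (Fin.castSucc (Fin.castSucc q)) (Fin.castSucc (Fin.last n))))
      + S (w' ∘ ⇑(Equiv.swap (Fin.castSucc (Fin.castSucc q)) (Fin.castSucc (Fin.last n))))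
      = - S w := by
    intro q
    have bb := bianchi_gen S hanti hsymm hcyc hn q w
    have hqN : Fin.castSucc (Fin.castSucc q) ≠ Fin.castSucc (Fin.last n) := by
      simp only [ne_eq, Fin.ext_iff, Fin.coe_castSucc, Fin.val_last]; omega
    have hqL : Fin.castSucc (Fin.castSucc q) ≠ Fin.last (n + 1) := by
      simp only [ne_eq, Fin.ext_iff, Fin.coe_castSucc, Fin.val_last]; omega
    have hNL : Fin.castSucc (Fin.last n) ≠ Fin.last (n + 1) := by
      simp only [ne_eq, Fin.ext_iff, Fin.coe_castSucc, Fin.val_last]; omega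
    have i1 : S (w ∘ ⇑(gmaP (Fin.castSucc (Fin.castSucc q))))
        = S (w ∘ ⇑(Equiv.swap (Fin.castSucc (Fin.castSucc q)) (Fin.castSucc (Fin.last n)))) := by
      have h := hsymm (w ∘ ⇑(Equiv.swap (Fin.castSucc (Fin.castSucc q))
        (Fin.castSucc (Fin.last n))))
      rw [show (w ∘ ⇑(Equiv.swap (Fin.castSucc (Fin.castSucc q)) (Fin.castSucc (Fin.last n)))) ∘
          ⇑(Equiv.swap (Fin.castSucc (Fin.last n)) (Fin.last (n + 1)))
          = w ∘ ⇑(gmaP (Fin.castSucc (Fin.castSucc q))) from funext fun x => by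
        simp [gmaP, Equiv.Perm.mul_apply]] at h
      exact h
    have hcyc2 := cyc2 hqN hNL hqL
    have i2 : S (w ∘ ⇑(gmaP (Fin.castSucc (Fin.castSucc q)) * gmaP (Fin.castSucc (Fin.castSucc q))))
        = S (w' ∘ ⇑(Equiv.swap (Fin.castSucc (Fin.castSucc q)) (Fin.castSucc (Fin.last n)))) := by
      congr 1
      funext x
      show w ((gmaP (Fin.castSucc (Fin.castSucc q)) * gmaP (Fin.castSucc (Fin.castSucc q))) x) = _
      rw [show (gmaP (Fin.castSucc (Fin.castSucc q)) * gmaP (Fin.castSucc (Fin.castSucc q)))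
          = Equiv.swap (Fin.castSucc (Fin.last n)) (Fin.last (n + 1)) *
            Equiv.swap (Fin.castSucc (Fin.castSucc q)) (Fin.castSucc (Fin.last n)) from hcyc2,
        hws]
      simp [Equiv.Perm.mul_apply]
    rw [← i1, ← i2]
    linarith [bb]
  have hS2 : ∑ q : Fin n,
      S (w ∘ ⇑(Equiv.swap (Fin.castSucc (Fin.castSucc q)) (Fin.castSucc (Fin.last n))))
      + ∑ q : Fin n,
      S (w' ∘ ⇑(Equiv.swap (Fin.castSucc (Fin.castSucc q)) (Fin.castSucc (Fin.last n))))
      = - ((n : ℝ) * S w) := by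
    rw [← Finset.sum_add_distrib, Finset.sum_congr rfl (fun q _ => hq q)]
    simp [Finset.sum_const, Finset.card_univ, mul_comm]
  have key : ((n : ℝ) + 2) * S w = ((n : ℝ) + 1) * (asymFirst S w + asymFirst S w') := by
    rw [mul_add, e1, e2, hSw]
    linarith [hS2]
  have hne : ((n : ℝ) + 2) ≠ 0 := by positivity
  rw [div_mul_eq_mul_div, eq_div_iff hne]
  linarith [key]
end

section
/- Let d ≥ 1 and n ≥ 2, and let T : (Fin(n+1) → Fin d) → ℝ be a covariant (n+1)-tensor satisfying the K-condition of degree n (antisymmetric in its first n indices, with vanishing full antisymmetrization over all n+1 indices). Then φ(T), defined by φ(T)(μ_1,…,μ_{n−1},ν,λ) = ½(T(μ_1,…,μ_{n−1},ν,λ) + T(μ_1,…,μ_{n−1},λ,ν)), satisfies the G-condition of degree n: φ(T) is antisymmetric in its first n−1 indices, symmetric in its last two indices, and satisfies the cyclic relation Σ_{i=0}^{n} (−1)^{i·n} φ(T)(μ_{τ^i(1)}, …, μ_{τ^i(n+1)}) = 0 for every multi-index μ, where τ is the cyclic permutation of the n+1 index slots. -/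
/-- The K-condition of degree `n` for a covariant `(n+1)`-tensor: antisymmetry in the first
`n` indices (`T(μ∘σ) = sign σ · T μ` for every permutation `σ` fixing the last slot) together
with vanishing full antisymmetrization over all `n+1` indices. -/
def KCond {d n : ℕ} (T : (Fin (n + 1) → Fin d) → ℝ) : Prop :=
  (∀ σ : Equiv.Perm (Fin (n + 1)), σ (Fin.last n) = Fin.last n →
    ∀ μ : Fin (n + 1) → Fin d, T (fun i => μ (σ i)) = sgn σ * T μ) ∧
  (∀ μ : Fin (n + 1) → Fin d,
    ∑ σ : Equiv.Perm (Fin (n + 1)), sgn σ * T (fun i => μ (σ i)) = 0)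

/-- The G-condition of degree `n` for a covariant `(n+1)`-tensor: antisymmetry in the first
`n−1` indices (permutations fixing the last two slots), symmetry in the last two indices, and
the cyclic relation `∑_{i=0}^{n} (−1)^{i·n} S(μ ∘ τ^i) = 0`, where `τ` is the cyclic
permutation of the `n+1` index slots. -/
def GCond {d n : ℕ} (S : (Fin (n + 1) → Fin d) → ℝ) : Prop :=
  (∀ σ : Equiv.Perm (Fin (n + 1)), σ (Fin.last n) = Fin.last n →
    σ ⟨n - 1, by omega⟩ = ⟨n - 1, by omega⟩ →
    ∀ μ : Fin (n + 1) → Fin d, S (fun i => μ (σ i)) = sgn σ * S μ) ∧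
  (∀ μ : Fin (n + 1) → Fin d,
    S (μ ∘ Equiv.swap (⟨n - 1, by omega⟩ : Fin (n + 1)) (Fin.last n)) = S μ) ∧
  (∀ μ : Fin (n + 1) → Fin d,
    ∑ i ∈ Finset.range (n + 1),
      (-1 : ℝ) ^ (i * n) * S (fun j => μ ((finRotate (n + 1) ^ i) j)) = 0)

/-- The map `φ`, symmetrizing the last two indices of an `(n+1)`-tensor. -/
noncomputable def phi {d n : ℕ} (T : (Fin (n + 1) → Fin d) → ℝ) : (Fin (n + 1) → Fin d) → ℝ :=
  fun w => (1 / 2 : ℝ) *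
    (T w + T (w ∘ Equiv.swap (⟨n - 1, by omega⟩ : Fin (n + 1)) (Fin.last n)))

namespace Stmt6Aux

open Fin.NatCast

lemma rot_pow_apply (m k : ℕ) (x : Fin (m+1)) :
    ((finRotate (m+1)) ^ k) x = x + (k : Fin (m+1)) := by
  induction k with
  | zero => simp
  | succ k ih =>
    rw [pow_succ', Equiv.Perm.mul_apply, finRotate_succ_apply, ih]
    push_cast; abel

lemma sgn_mul {m : ℕ} (a b : Equiv.Perm (Fin m)) : sgn (a*b) = sgn a * sgn b := by
  simp [sgn, map_mul]

lemma sgn_sq {m : ℕ} (a : Equiv.Perm (Fin m)) : sgn a * sgn a = 1 := by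
  simp [sgn, ← Int.cast_mul, ← Units.val_mul, Int.units_mul_self]

lemma sgn_rot_pow (n k : ℕ) : sgn ((finRotate (n+1))^k) = (-1:ℝ)^(k*n) := by
  simp [sgn, map_pow, sign_finRotate, ← pow_mul, mul_comm]

lemma coset_sum (d n : ℕ) (T : (Fin (n+1) → Fin d) → ℝ)
    (hA : ∀ σ : Equiv.Perm (Fin (n + 1)), σ (Fin.last n) = Fin.last n →
      ∀ μ : Fin (n+1) → Fin d, T (fun i => μ (σ i)) = sgn σ * T μ)
    (hS : ∀ μ : Fin (n+1) → Fin d,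
      ∑ σ : Equiv.Perm (Fin (n+1)), sgn σ * T (fun i => μ (σ i)) = 0)
    (ρ : Equiv.Perm (Fin (n+1))) (μ : Fin (n+1) → Fin d) :
    ∑ i ∈ Finset.range (n+1), (-1:ℝ)^(i*n) *
      T (fun j => μ (((finRotate (n+1))^i * ρ) j)) = 0 := by
  set c := finRotate (n+1) with hcdef
  set H : Finset (Equiv.Perm (Fin (n+1))) :=
    Finset.univ.filter (fun τ => τ (Fin.last n) = Fin.last n) with hH
  have hc : ∀ (k : ℕ) (x : Fin (n+1)), (c^k) x = x + (k : Fin (n+1)) := rot_pow_apply n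
  -- forward index
  set idx : Equiv.Perm (Fin (n+1)) → Fin (n+1) :=
    fun σ => σ (Fin.last n) - ρ (Fin.last n) with hidxdef
  have hApp : ∀ σ : Equiv.Perm (Fin (n+1)),
      (c^((idx σ : Fin (n+1)) : ℕ) * ρ) (Fin.last n) = σ (Fin.last n) := by
    intro σ
    rw [Equiv.Perm.mul_apply, hc, Fin.cast_val_eq_self, hidxdef]
    exact add_sub_cancel _ _
  have key : ∑ σ : Equiv.Perm (Fin (n+1)), sgn σ * T (fun i => μ (σ i))
      = ∑ p ∈ (Finset.univ : Finset (Fin (n+1))) ×ˢ H,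
          sgn (c^((p.1 : Fin (n+1)) : ℕ) * ρ) *
            T (fun j => μ ((c^((p.1 : Fin (n+1)) : ℕ) * ρ) j)) := by
    refine Finset.sum_nbij'
      (i := fun σ => (idx σ, (c^((idx σ : Fin (n+1)) : ℕ) * ρ)⁻¹ * σ))
      (j := fun p => c^((p.1 : Fin (n+1)) : ℕ) * ρ * p.2)
      ?_ ?_ ?_ ?_ ?_
    · intro σ _
      rw [Finset.mem_product]
      refine ⟨Finset.mem_univ _, ?_⟩
      rw [hH, Finset.mem_filter]
      refine ⟨Finset.mem_univ _, ?_⟩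
      have : ((c^((idx σ : Fin (n+1)) : ℕ) * ρ)⁻¹ * σ) (Fin.last n)
          = (c^((idx σ : Fin (n+1)) : ℕ) * ρ)⁻¹ ((c^((idx σ : Fin (n+1)) : ℕ) * ρ) (Fin.last n)) := by
        rw [hApp]; rfl
      rw [this, Equiv.Perm.inv_def, Equiv.symm_apply_apply]
    · intro p _; exact Finset.mem_univ _
    · intro σ _
      exact mul_inv_cancel_left _ _
    · rintro ⟨k, τ⟩ hp
      rw [Finset.mem_product, hH, Finset.mem_filter] at hp
      have hτ : τ (Fin.last n) = Fin.last n := hp.2.2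
      have h1 : idx (c^((k : Fin (n+1)) : ℕ) * ρ * τ) = k := by
        rw [hidxdef]
        simp only [Equiv.Perm.mul_apply, hτ, hc, Fin.cast_val_eq_self]
        exact add_sub_cancel_left _ _
      simp only [Prod.mk.injEq]
      refine ⟨h1, ?_⟩
      rw [h1, inv_mul_cancel_left]
    · intro σ _
      show sgn σ * T (fun i => μ (σ i))
          = sgn (c^((idx σ : Fin (n+1)) : ℕ) * ρ) *
              T (fun j => μ ((c^((idx σ : Fin (n+1)) : ℕ) * ρ) j))
      have hσeq : σ = c^((idx σ : Fin (n+1)) : ℕ) * ρ * ((c^((idx σ : Fin (n+1)) : ℕ) * ρ)⁻¹ * σ) := by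
        rw [mul_inv_cancel_left]
      set A := c^((idx σ : Fin (n+1)) : ℕ) * ρ with hA'
      set τ := A⁻¹ * σ with hτ'
      have hτfix : τ (Fin.last n) = Fin.last n := by
        have : τ (Fin.last n) = A⁻¹ (A (Fin.last n)) := by
          rw [hτ', hA', hApp]; rfl
        rw [this, Equiv.Perm.inv_def, Equiv.symm_apply_apply]
      have hTστ : T (fun i => μ (σ i)) = sgn τ * T (fun j => μ (A j)) := by
        have := hA τ hτfix (fun j => μ (A j))
        rw [← this]
        congr 1
        funext i
        rw [hσeq]
        rfl
      have hsg : sgn σ = sgn A * sgn τ := by rw [hσeq, sgn_mul]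
      rw [hTστ, hsg, mul_assoc, ← mul_assoc (sgn τ) (sgn τ), sgn_sq, one_mul]
  rw [hS μ, Finset.sum_product] at key
  have key2 : (0:ℝ) = ∑ k : Fin (n+1),
      (H.card : ℝ) * (sgn (c^((k : Fin (n+1)) : ℕ) * ρ) * T (fun j => μ ((c^((k : Fin (n+1)) : ℕ) * ρ) j))) := by
    rw [key]
    refine Finset.sum_congr rfl fun k _ => ?_
    have hconst : (∑ y ∈ H, sgn (c^(((k, y).1 : Fin (n+1)) : ℕ) * ρ) *
        T (fun j => μ ((c^(((k, y).1 : Fin (n+1)) : ℕ) * ρ) j)))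
        = ∑ _y ∈ H, sgn (c^((k : Fin (n+1)) : ℕ) * ρ) *
            T (fun j => μ ((c^((k : Fin (n+1)) : ℕ) * ρ) j)) :=
      Finset.sum_congr rfl fun y _ => rfl
    rw [hconst, Finset.sum_const, nsmul_eq_mul]
  have hcard : (H.card : ℝ) ≠ 0 := by
    have : (1 : Equiv.Perm (Fin (n+1))) ∈ H := by
      rw [hH, Finset.mem_filter]; exact ⟨Finset.mem_univ _, rfl⟩
    have := Finset.card_pos.mpr ⟨_, this⟩
    positivity
  rw [← Finset.mul_sum] at key2
  have key3 : ∑ k : Fin (n+1),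
      sgn (c^((k : Fin (n+1)) : ℕ) * ρ) * T (fun j => μ ((c^((k : Fin (n+1)) : ℕ) * ρ) j)) = 0 := by
    rcases mul_eq_zero.mp key2.symm with h | h
    · exact absurd h hcard
    · exact h
  -- factor sgn ρ
  have key4 : sgn ρ * ∑ k : Fin (n+1),
      (-1:ℝ)^(((k : Fin (n+1)) : ℕ)*n) * T (fun j => μ ((c^((k : Fin (n+1)) : ℕ) * ρ) j)) = 0 := by
    rw [Finset.mul_sum]
    rw [← key3]
    refine Finset.sum_congr rfl fun k _ => ?_
    rw [sgn_mul, sgn_rot_pow]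
    ring
  have hρ : sgn ρ ≠ 0 := by
    intro h
    have := sgn_sq ρ
    rw [h, mul_zero] at this
    exact one_ne_zero this.symm
  have key5 := (mul_eq_zero.mp key4).resolve_left hρ
  rw [← Fin.sum_univ_eq_sum_range (fun i => (-1:ℝ)^(i*n) * T (fun j => μ ((c^i * ρ) j))) (n+1)]
  exact key5

end Stmt6Aux

/-- (Well-definedness of `φ : K^n(M) → G^n(M)`.)  Let `d ≥ 1`, `n ≥ 2`, and
let `T : (Fin (n+1) → Fin d) → ℝ` satisfy the K-condition of degree `n`.  Then `φ(T)`, which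
symmetrizes the last two indices of `T`, satisfies the G-condition of degree `n`. -/

theorem stmt6 (d n : ℕ) (hd : 1 ≤ d) (hn : 2 ≤ n)
    (T : (Fin (n + 1) → Fin d) → ℝ) (hT : KCond T) :
    GCond (phi T) := by
  obtain ⟨hA, hS⟩ := hT
  set a : Fin (n+1) := ⟨n - 1, by omega⟩ with ha
  set b : Fin (n+1) := Fin.last n with hb
  have hab : a ≠ b := by
    intro h
    have := congrArg Fin.val h
    simp only [ha, hb, Fin.last] at this
    omega
  refine ⟨?_, ?_, ?_⟩
  · -- antisymmetry in first n-1 indices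
    intro σ hσb hσa μ
    have hcomm : ∀ i, σ (Equiv.swap a b i) = Equiv.swap a b (σ i) := by
      intro i
      by_cases hia : i = a
      · subst hia
        rw [Equiv.swap_apply_left, hσb, hσa, Equiv.swap_apply_left]
      by_cases hib : i = b
      · subst hib
        rw [Equiv.swap_apply_right, hσa, hσb, Equiv.swap_apply_right]
      · rw [Equiv.swap_apply_of_ne_of_ne hia hib,
          Equiv.swap_apply_of_ne_of_ne
            (fun h => hia (σ.injective (by rw [h, hσa])))
            (fun h => hib (σ.injective (by rw [h, hσb])))]
    have h1 : T (fun i => μ (σ i)) = sgn σ * T μ := hA σ hσb μ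
    have h2 : T ((fun i => μ (σ i)) ∘ Equiv.swap a b)
        = sgn σ * T (μ ∘ Equiv.swap a b) := by
      have heq : ((fun i => μ (σ i)) ∘ Equiv.swap a b)
          = fun i => (μ ∘ Equiv.swap a b) (σ i) :=
        funext fun i => congrArg μ (hcomm i)
      rw [heq]
      exact hA σ hσb (μ ∘ Equiv.swap a b)
    show (1 / 2 : ℝ) * (T (fun i => μ (σ i)) + T ((fun i => μ (σ i)) ∘ Equiv.swap a b))
        = sgn σ * ((1 / 2 : ℝ) * (T μ + T (μ ∘ Equiv.swap a b)))
    rw [h1, h2]; ring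
  · -- symmetry in last two indices
    intro μ
    have hswsw : (μ ∘ Equiv.swap a b) ∘ Equiv.swap a b = μ := by
      funext i
      simp [Function.comp, Equiv.swap_apply_self]
    show (1 / 2 : ℝ) * (T (μ ∘ Equiv.swap a b) + T ((μ ∘ Equiv.swap a b) ∘ Equiv.swap a b))
        = (1 / 2 : ℝ) * (T μ + T (μ ∘ Equiv.swap a b))
    rw [hswsw]; ring
  · -- cyclic relation
    intro μ
    have e1 := Stmt6Aux.coset_sum d n T hA hS 1 μ
    have e2 := Stmt6Aux.coset_sum d n T hA hS (Equiv.swap a b) μ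
    have hterm : ∀ i ∈ Finset.range (n+1),
        (-1:ℝ)^(i*n) * phi T (fun j => μ ((finRotate (n + 1) ^ i) j))
          = (1/2 : ℝ) * ((-1:ℝ)^(i*n) * T (fun j => μ (((finRotate (n+1))^i * 1) j)))
            + (1/2 : ℝ) * ((-1:ℝ)^(i*n) *
                T (fun j => μ (((finRotate (n+1))^i * Equiv.swap a b) j))) := by
      intro i _
      have hx : T (fun j => μ (((finRotate (n+1))^i * 1) j))
          = T (fun j => μ ((finRotate (n + 1) ^ i) j)) := by
        rw [mul_one]
      have hy : T ((fun j => μ ((finRotate (n + 1) ^ i) j)) ∘ Equiv.swap a b)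
          = T (fun j => μ (((finRotate (n+1))^i * Equiv.swap a b) j)) := rfl
      show (-1:ℝ)^(i*n) * ((1 / 2 : ℝ) * (T (fun j => μ ((finRotate (n + 1) ^ i) j))
          + T ((fun j => μ ((finRotate (n + 1) ^ i) j)) ∘ Equiv.swap a b))) = _
      rw [hx, hy]
      ring
    rw [Finset.sum_congr rfl hterm, Finset.sum_add_distrib,
      ← Finset.mul_sum, ← Finset.mul_sum, e1, e2]
    ring
end

section
/- Let d ≥ 1 and n ≥ 2. The maps φ and ψ are mutually inverse linear bijections between the space of covariant (n+1)-tensors over Fin d satisfying the K-condition of degree n and the space of covariant (n+1)-tensors over Fin d satisfying the G-condition of degree n: ψ∘φ is the identity on the former and φ∘ψ is the identity on the latter. -/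
/-- The map `ψ`, antisymmetrizing the first `n` indices with the factor `2n/(n+1)`:
`ψ(S)(μ₁,…,μ_n,ν) = (2n/(n+1))·(1/n!)·∑_{σ ∈ Perm(Fin n)} sign σ · S(μ_{σ(1)},…,μ_{σ(n)},ν)`. -/
noncomputable def psi {d n : ℕ} (S : (Fin (n + 1) → Fin d) → ℝ) :
    (Fin (n + 1) → Fin d) → ℝ :=
  fun w => (2 * (n : ℝ) / ((n : ℝ) + 1)) * (Nat.factorial n : ℝ)⁻¹ *
    ∑ σ : Equiv.Perm (Fin n),
      sgn σ * S (w ∘ Fin.snoc (Fin.castSucc ∘ ⇑σ) (Fin.last n))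

namespace Stmt7
open Equiv Finset Fin
open Fin.NatCast Fin.CommRing

lemma sgn_mul {k : ℕ} (σ ρ : Equiv.Perm (Fin k)) : sgn (σ * ρ) = sgn σ * sgn ρ := by
  simp [sgn]

@[simp] lemma sgn_one {k : ℕ} : sgn (1 : Equiv.Perm (Fin k)) = 1 := by simp [sgn]

lemma sgn_sq {k : ℕ} (σ : Equiv.Perm (Fin k)) : sgn σ * sgn σ = 1 := by
  rcases Int.units_eq_one_or (Equiv.Perm.sign σ) with h | h <;> simp [sgn, h]

lemma sgn_swap {k : ℕ} {a b : Fin k} (h : a ≠ b) : sgn (Equiv.swap a b) = -1 := by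
  simp [sgn, Equiv.Perm.sign_swap h]

lemma sgn_pow {k : ℕ} (σ : Equiv.Perm (Fin k)) (i : ℕ) : sgn (σ ^ i) = sgn σ ^ i := by
  simp [sgn]

/-- extension of a permutation of `Fin k` to `Fin (k+1)` fixing the last element. -/
def extL {k : ℕ} (σ : Equiv.Perm (Fin k)) : Equiv.Perm (Fin (k + 1)) :=
  (Equiv.permCongr finSuccEquivLast.symm) σ.optionCongr

@[simp] lemma extL_castSucc {k : ℕ} (σ : Equiv.Perm (Fin k)) (i : Fin k) :
    extL σ (castSucc i) = castSucc (σ i) := by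
  simp [extL, Equiv.permCongr_apply]

@[simp] lemma extL_last {k : ℕ} (σ : Equiv.Perm (Fin k)) :
    extL σ (last k) = last k := by
  simp [extL, Equiv.permCongr_apply]

lemma sgn_extL {k : ℕ} (σ : Equiv.Perm (Fin k)) : sgn (extL σ) = sgn σ := by
  simp [sgn, extL, Equiv.Perm.sign_permCongr, Equiv.optionCongr_sign]

lemma extL_mul {k : ℕ} (σ ρ : Equiv.Perm (Fin k)) :
    extL (σ * ρ) = extL σ * extL ρ := by
  ext x
  refine Fin.lastCases ?_ ?_ x <;> simp [Equiv.Perm.mul_apply]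

lemma extL_injective {k : ℕ} : Function.Injective (extL (k := k)) := by
  intro σ ρ h
  apply Equiv.ext; intro i
  have := congrArg (fun e : Equiv.Perm (Fin (k+1)) => e (castSucc i)) h
  simp only [extL_castSucc] at this
  exact Fin.castSucc_injective _ this

lemma extL_swap {k : ℕ} (a b : Fin k) :
    extL (Equiv.swap a b) = Equiv.swap (castSucc a) (castSucc b) := by
  ext x
  refine Fin.lastCases ?_ (fun i => ?_) x
  · rw [extL_last, Equiv.swap_apply_of_ne_of_ne (Fin.castSucc_lt_last a).ne' (Fin.castSucc_lt_last b).ne']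
  · rw [extL_castSucc]
    rcases eq_or_ne i a with rfl | ha
    · rw [Equiv.swap_apply_left, Equiv.swap_apply_left]
    rcases eq_or_ne i b with rfl | hb
    · rw [Equiv.swap_apply_right, Equiv.swap_apply_right]
    · rw [Equiv.swap_apply_of_ne_of_ne ha hb,
        Equiv.swap_apply_of_ne_of_ne (by simpa [Fin.castSucc_inj] using ha) (by simpa [Fin.castSucc_inj] using hb)]

lemma perm_decompose (k : ℕ) :
    Function.Bijective (fun x : Fin (k+1) × Equiv.Perm (Fin k) =>
      Equiv.swap x.1 (last k) * extL x.2) := by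
  rw [Fintype.bijective_iff_injective_and_card]
  constructor
  · rintro ⟨a, ρ⟩ ⟨a', ρ'⟩ h
    have ha : a = a' := by
      have := congrArg (fun e : Equiv.Perm (Fin (k+1)) => e (last k)) h
      simpa [Equiv.Perm.mul_apply, extL_last] using this
    subst ha
    have := mul_left_cancel h
    exact Prod.ext rfl (extL_injective this)
  · simp [Fintype.card_perm, Nat.factorial_succ]

lemma sum_perm_succ {k : ℕ} (f : Equiv.Perm (Fin (k+1)) → ℝ) :
    ∑ σ : Equiv.Perm (Fin (k+1)), f σ
      = ∑ a : Fin (k+1), ∑ ρ : Equiv.Perm (Fin k), f (Equiv.swap a (last k) * extL ρ) := by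
  rw [← (Fintype.sum_bijective _ (perm_decompose k) _ f fun x => rfl), Fintype.sum_prod_type]

lemma exists_extL_of_fix_last {k : ℕ} (σ : Equiv.Perm (Fin (k+1))) (h : σ (last k) = last k) :
    ∃ ρ : Equiv.Perm (Fin k), σ = extL ρ := by
  obtain ⟨⟨a, ρ⟩, hx⟩ := (perm_decompose k).2 σ
  refine ⟨ρ, ?_⟩
  have ha : a = last k := by
    rw [← hx] at h
    simpa [Equiv.Perm.mul_apply, extL_last] using h
  subst ha
  simp only [Equiv.swap_self] at hx
  rw [← hx]
  simp [Equiv.Perm.one_def]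


lemma swap_term_eq {d k : ℕ} (U : (Fin (k+1) → Fin d) → ℝ)
    (hU : ∀ σ : Equiv.Perm (Fin (k+1)), σ (last k) = last k →
      ∀ μ : Fin (k+1) → Fin d, U (μ ∘ σ) = sgn σ * U μ)
    (μ : Fin (k+1) → Fin d) (a : Fin (k+1)) (ρ : Equiv.Perm (Fin k)) :
    sgn (Equiv.swap a (last k) * extL ρ) * U (μ ∘ ⇑(Equiv.swap a (last k) * extL ρ))
      = sgn (Equiv.swap a (last k)) * U (μ ∘ Equiv.swap a (last k)) := by
  have h1 : (μ ∘ ⇑(Equiv.swap a (last k) * extL ρ)) = (μ ∘ Equiv.swap a (last k)) ∘ extL ρ := rfl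
  rw [h1, hU (extL ρ) (extL_last ρ), sgn_mul]
  rw [show sgn (Equiv.swap a (last k)) * sgn (extL ρ) *
        (sgn (extL ρ) * U (μ ∘ Equiv.swap a (last k)))
      = (sgn (extL ρ) * sgn (extL ρ)) *
        (sgn (Equiv.swap a (last k)) * U (μ ∘ Equiv.swap a (last k))) from by ring,
    sgn_sq, one_mul]

lemma K1_sum {d k : ℕ} (U : (Fin (k+1) → Fin d) → ℝ)
    (hU : ∀ σ : Equiv.Perm (Fin (k+1)), σ (last k) = last k →
      ∀ μ : Fin (k+1) → Fin d, U (μ ∘ σ) = sgn σ * U μ)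
    (μ : Fin (k+1) → Fin d) :
    ∑ σ : Equiv.Perm (Fin (k+1)), sgn σ * U (μ ∘ σ)
      = (k.factorial : ℝ) *
        (U μ - ∑ a : Fin k, U (μ ∘ Equiv.swap (castSucc a) (last k))) := by
  rw [sum_perm_succ (fun σ => sgn σ * U (μ ∘ σ))]
  have step : ∀ a : Fin (k+1),
      (∑ ρ : Equiv.Perm (Fin k),
        sgn (Equiv.swap a (last k) * extL ρ) * U (μ ∘ ⇑(Equiv.swap a (last k) * extL ρ)))
      = (k.factorial : ℝ) * (sgn (Equiv.swap a (last k)) * U (μ ∘ Equiv.swap a (last k))) := by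
    intro a
    rw [Finset.sum_congr rfl (fun ρ _ => swap_term_eq U hU μ a ρ), Finset.sum_const,
      card_univ, Fintype.card_perm, Fintype.card_fin, nsmul_eq_mul]
  rw [Finset.sum_congr rfl (fun a _ => step a), ← Finset.mul_sum]
  congr 1
  rw [Fin.sum_univ_castSucc]
  have hlast : sgn (Equiv.swap (last k) (last k)) * U (μ ∘ Equiv.swap (last k) (last k)) = U μ := by
    rw [Equiv.swap_self]
    have : (μ ∘ ⇑(Equiv.refl (Fin (k+1)))) = μ := rfl
    rw [this]
    have : sgn (Equiv.refl (Fin (k+1))) = 1 := sgn_one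
    rw [this, one_mul]
  rw [hlast]
  have hc : ∀ a : Fin k,
      sgn (Equiv.swap (castSucc a) (last k)) * U (μ ∘ Equiv.swap (castSucc a) (last k))
      = - U (μ ∘ Equiv.swap (castSucc a) (last k)) := by
    intro a
    rw [sgn_swap (Fin.castSucc_lt_last a).ne, neg_one_mul]
  rw [Finset.sum_congr rfl (fun a _ => hc a), Finset.sum_neg_distrib]
  ring

lemma sum_apply_last {k : ℕ} (F : Fin (k+1) → ℝ) :
    ∑ σ : Equiv.Perm (Fin (k+1)), F (σ (last k))
      = (k.factorial : ℝ) * ∑ a : Fin (k+1), F a := by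
  rw [sum_perm_succ (fun σ => F (σ (last k)))]
  have : ∀ a : Fin (k+1), ∀ ρ : Equiv.Perm (Fin k),
      F ((Equiv.swap a (last k) * extL ρ) (last k)) = F a := by
    intro a ρ
    rw [Equiv.Perm.mul_apply, extL_last, Equiv.swap_apply_right]
  rw [Finset.sum_congr rfl (fun a _ => Finset.sum_congr rfl (fun ρ _ => this a ρ))]
  simp only [Finset.sum_const, card_univ, Fintype.card_perm, Fintype.card_fin, nsmul_eq_mul]
  rw [← Finset.mul_sum]


def pp (m : ℕ) : Fin (m+3) := castSucc (last (m+1))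

lemma G1_swap_term {d m : ℕ} (S : (Fin (m+3) → Fin d) → ℝ)
    (hS1 : ∀ σ : Equiv.Perm (Fin (m+3)), σ (last (m+2)) = last (m+2) → σ (pp m) = pp m →
      ∀ μ : Fin (m+3) → Fin d, S (μ ∘ σ) = sgn σ * S μ)
    (w : Fin (m+3) → Fin d) (a : Fin (m+2)) (ρ : Equiv.Perm (Fin (m+1))) :
    sgn (Equiv.swap a (last (m+1)) * extL ρ) *
      S (w ∘ extL (Equiv.swap a (last (m+1)) * extL ρ))
    = sgn (Equiv.swap a (last (m+1))) * S (w ∘ Equiv.swap (castSucc a) (pp m)) := by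
  rw [extL_mul, extL_swap]
  rw [show (last (m+1)).castSucc = pp m from rfl]
  have h1 : (w ∘ ⇑(Equiv.swap (castSucc a) (pp m) * extL (extL ρ)))
      = (w ∘ ⇑(Equiv.swap (castSucc a) (pp m))) ∘ ⇑(extL (extL ρ)) := rfl
  have hfix1 : extL (extL ρ) (last (m+2)) = last (m+2) := extL_last _
  have hfix2 : extL (extL ρ) (pp m) = pp m := by
    rw [pp, extL_castSucc, extL_last]
  rw [h1, hS1 (extL (extL ρ)) hfix1 hfix2, sgn_mul]
  simp only [sgn_extL]
  rw [show sgn (Equiv.swap a (last (m+1))) * sgn ρ *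
        (sgn ρ * S (w ∘ ⇑(Equiv.swap (castSucc a) (pp m))))
      = (sgn ρ * sgn ρ) *
        (sgn (Equiv.swap a (last (m+1))) * S (w ∘ ⇑(Equiv.swap (castSucc a) (pp m)))) from by
      ring, sgn_sq, one_mul]

lemma G1_sum {d m : ℕ} (S : (Fin (m+3) → Fin d) → ℝ)
    (hS1 : ∀ σ : Equiv.Perm (Fin (m+3)), σ (last (m+2)) = last (m+2) → σ (pp m) = pp m →
      ∀ μ : Fin (m+3) → Fin d, S (μ ∘ σ) = sgn σ * S μ)
    (w : Fin (m+3) → Fin d) :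
    ∑ σ : Equiv.Perm (Fin (m+2)), sgn σ * S (w ∘ extL σ)
      = ((m+1).factorial : ℝ) *
        (S w - ∑ j : Fin (m+1), S (w ∘ Equiv.swap (castSucc (castSucc j)) (pp m))) := by
  rw [sum_perm_succ (fun σ => sgn σ * S (w ∘ extL σ))]
  have step : ∀ a : Fin (m+2),
      (∑ ρ : Equiv.Perm (Fin (m+1)),
        sgn (Equiv.swap a (last (m+1)) * extL ρ) *
          S (w ∘ extL (Equiv.swap a (last (m+1)) * extL ρ)))
      = ((m+1).factorial : ℝ) *
        (sgn (Equiv.swap a (last (m+1))) * S (w ∘ Equiv.swap (castSucc a) (pp m))) := by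
    intro a
    rw [Finset.sum_congr rfl (fun ρ _ => G1_swap_term S hS1 w a ρ), Finset.sum_const,
      card_univ, Fintype.card_perm, Fintype.card_fin, nsmul_eq_mul]
  rw [Finset.sum_congr rfl (fun a _ => step a), ← Finset.mul_sum]
  congr 1
  rw [Fin.sum_univ_castSucc]
  have hlast : sgn (Equiv.swap (last (m+1)) (last (m+1))) *
      S (w ∘ Equiv.swap (castSucc (last (m+1))) (pp m)) = S w := by
    have hpp : Equiv.swap (castSucc (last (m+1))) (pp m) = Equiv.refl _ := Equiv.swap_self _
    rw [Equiv.swap_self, hpp]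
    have h2 : (w ∘ ⇑(Equiv.refl (Fin (m+3)))) = w := rfl
    rw [h2]
    have h3 : sgn (Equiv.refl (Fin (m+2))) = 1 := sgn_one
    rw [h3, one_mul]
  rw [hlast]
  have hc : ∀ a : Fin (m+1),
      sgn (Equiv.swap (castSucc a) (last (m+1))) *
        S (w ∘ Equiv.swap (castSucc (castSucc a)) (pp m))
      = - S (w ∘ Equiv.swap (castSucc (castSucc a)) (pp m)) := by
    intro a
    rw [sgn_swap (Fin.castSucc_lt_last a).ne, neg_one_mul]
  rw [Finset.sum_congr rfl (fun a _ => hc a), Finset.sum_neg_distrib]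
  ring

noncomputable def Zf {d k : ℕ} (T : (Fin (k+1) → Fin d) → ℝ) (μ : Fin (k+1) → Fin d) (a : Fin (k+1)) : ℝ :=
  sgn (Equiv.swap a (last k)) * T (μ ∘ Equiv.swap a (last k))

lemma ZW {d k : ℕ} (T : (Fin (k+1) → Fin d) → ℝ)
    (hT1 : ∀ σ : Equiv.Perm (Fin (k+1)), σ (last k) = last k →
      ∀ μ : Fin (k+1) → Fin d, T (μ ∘ σ) = sgn σ * T μ)
    (μ : Fin (k+1) → Fin d) (g : Equiv.Perm (Fin (k+1))) :
    T (μ ∘ g) = sgn g * Zf T μ (g (last k)) := by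
  set s := Equiv.swap (g (last k)) (last k) with hs
  have hr : (s * g) (last k) = last k := by
    simp [Equiv.Perm.mul_apply, hs]
  have key : T (μ ∘ ⇑g) = sgn (s * g) * T (μ ∘ ⇑s) := by
    have h0 := hT1 (s * g) hr (μ ∘ ⇑s)
    have e1 : (μ ∘ ⇑s) ∘ ⇑(s * g) = μ ∘ ⇑g := by
      funext x
      simp [hs, Equiv.Perm.mul_apply, Equiv.swap_apply_self]
    rwa [e1] at h0
  rw [key, sgn_mul, Zf]
  ring

lemma rot_pow {k : ℕ} (i : ℕ) (x : Fin (k+1)) :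
    (finRotate (k+1) ^ i) x = x + (i : Fin (k+1)) := by
  induction i generalizing x with
  | zero => simp
  | succ i ih =>
    rw [pow_succ, Equiv.Perm.mul_apply, finRotate_succ_apply, ih (x + 1)]
    push_cast
    ring

lemma sum_shift {k : ℕ} (f : Fin (k+1) → ℝ) (x₀ : Fin (k+1)) :
    ∑ i ∈ Finset.range (k+1), f (x₀ + (i : Fin (k+1))) = ∑ x : Fin (k+1), f x := by
  rw [← Fin.sum_univ_eq_sum_range (fun i => f (x₀ + (i : Fin (k+1)))) (k+1)]
  have : ∀ i : Fin (k+1), f (x₀ + ((i : ℕ) : Fin (k+1))) = f (x₀ + i) := by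
    intro i; rw [Fin.cast_val_eq_self]
  rw [Finset.sum_congr rfl (fun i _ => this i)]
  exact Equiv.sum_comp (Equiv.addLeft x₀) f


lemma swap_eq_iff {α : Type*} [DecidableEq α] {u v x y : α} :
    Equiv.swap u v x = y ↔ x = Equiv.swap u v y := by
  constructor
  · rintro rfl; rw [Equiv.swap_apply_self]
  · rintro rfl; rw [Equiv.swap_apply_self]

lemma exists_perm3 {α : Type*} [DecidableEq α] (x0 x1 x2 a b c : α)
    (h01 : x0 ≠ x1) (h02 : x0 ≠ x2) (h12 : x1 ≠ x2)
    (hab : a ≠ b) (hac : a ≠ c) (hbc : b ≠ c) :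
    ∃ e : Equiv.Perm α, e x0 = a ∧ e x1 = b ∧ e x2 = c := by
  set s1 := Equiv.swap x0 a with hs1
  set s2 := Equiv.swap x1 (s1 b) with hs2
  set s3 := Equiv.swap x2 (s2 (s1 c)) with hs3
  have hb'x0 : s1 b ≠ x0 := by
    rw [hs1]
    intro h
    rw [swap_eq_iff, Equiv.swap_apply_left] at h
    exact hab h.symm
  have hc'x0 : s2 (s1 c) ≠ x0 := by
    rw [hs2]
    intro h
    rw [swap_eq_iff, Equiv.swap_apply_of_ne_of_ne h01 (Ne.symm hb'x0), hs1,
      swap_eq_iff, Equiv.swap_apply_left] at h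
    exact hac h.symm
  have hc'x1 : s2 (s1 c) ≠ x1 := by
    rw [hs2]
    intro h
    rw [swap_eq_iff, Equiv.swap_apply_left, hs1] at h
    exact hbc (Equiv.injective _ h).symm
  refine ⟨s1 * s2 * s3, ?_, ?_, ?_⟩
  · have e3 : s3 x0 = x0 := Equiv.swap_apply_of_ne_of_ne h02 (Ne.symm hc'x0)
    have e2 : s2 x0 = x0 := Equiv.swap_apply_of_ne_of_ne h01 (Ne.symm hb'x0)
    simp only [Equiv.Perm.mul_apply, e3, e2, hs1, Equiv.swap_apply_left]
  · have e3 : s3 x1 = x1 := Equiv.swap_apply_of_ne_of_ne h12 (Ne.symm hc'x1)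
    have e2 : s2 x1 = s1 b := Equiv.swap_apply_left _ _
    simp only [Equiv.Perm.mul_apply, e3, e2, hs1, Equiv.swap_apply_self]
  · have e3 : s3 x2 = s2 (s1 c) := Equiv.swap_apply_left _ _
    simp only [Equiv.Perm.mul_apply, e3, hs2, hs1, Equiv.swap_apply_self]

lemma exists_perm4 {α : Type*} [DecidableEq α] (x0 x1 x2 x3 a b c dd : α)
    (h01 : x0 ≠ x1) (h02 : x0 ≠ x2) (h03 : x0 ≠ x3)
    (h12 : x1 ≠ x2) (h13 : x1 ≠ x3) (h23 : x2 ≠ x3)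
    (hab : a ≠ b) (hac : a ≠ c) (had : a ≠ dd) (hbc : b ≠ c) (hbd : b ≠ dd) (hcd : c ≠ dd) :
    ∃ e : Equiv.Perm α, e x0 = a ∧ e x1 = b ∧ e x2 = c ∧ e x3 = dd := by
  obtain ⟨e0, he0, he1, he2⟩ := exists_perm3 x0 x1 x2 a b c h01 h02 h12 hab hac hbc
  set s4 := Equiv.swap x3 (e0⁻¹ dd) with hs4
  have hd0 : e0⁻¹ dd ≠ x0 := by
    intro h
    exact had (by rw [← he0, ← h, Equiv.Perm.inv_def, Equiv.apply_symm_apply])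
  have hd1 : e0⁻¹ dd ≠ x1 := by
    intro h
    exact hbd (by rw [← he1, ← h, Equiv.Perm.inv_def, Equiv.apply_symm_apply])
  have hd2 : e0⁻¹ dd ≠ x2 := by
    intro h
    exact hcd (by rw [← he2, ← h, Equiv.Perm.inv_def, Equiv.apply_symm_apply])
  refine ⟨e0 * s4, ?_, ?_, ?_, ?_⟩
  · have : s4 x0 = x0 := Equiv.swap_apply_of_ne_of_ne h03 (Ne.symm hd0)
    rw [Equiv.Perm.mul_apply, this, he0]
  · have : s4 x1 = x1 := Equiv.swap_apply_of_ne_of_ne h13 (Ne.symm hd1)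
    rw [Equiv.Perm.mul_apply, this, he1]
  · have : s4 x2 = x2 := Equiv.swap_apply_of_ne_of_ne h23 (Ne.symm hd2)
    rw [Equiv.Perm.mul_apply, this, he2]
  · rw [Equiv.Perm.mul_apply, hs4, Equiv.swap_apply_left, Equiv.Perm.inv_def, Equiv.apply_symm_apply]


lemma mk_add_one {k j : ℕ} (hj : j < k + 1) (h : j + 1 < k + 1) :
    (⟨j, hj⟩ : Fin (k+1)) + 1 = ⟨j+1, h⟩ := by
  apply Fin.ext
  rw [Fin.val_add_one_of_lt (Fin.lt_def.mpr (by
    simp only [Fin.val_last]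
    exact (by omega : j < k)))]

lemma exists_fourth {k : ℕ} (hk : 4 ≤ k) (a b c : Fin k) :
    ∃ dd : Fin k, dd ≠ a ∧ dd ≠ b ∧ dd ≠ c := by
  by_contra h
  push_neg at h
  have hsub : (Finset.univ : Finset (Fin k)) ⊆ {a, b, c} := by
    intro x _
    simp only [Finset.mem_insert, Finset.mem_singleton]
    by_contra hx
    push_neg at hx
    exact hx.2.2 (h x hx.1 hx.2.1)
  have h1 := Finset.card_le_card hsub
  have h2 : ({a, b, c} : Finset (Fin k)).card ≤ 3 := by
    apply le_trans (Finset.card_insert_le _ _)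
    have := Finset.card_insert_le b ({c} : Finset (Fin k))
    simp only [Finset.card_singleton] at this
    omega
  simp only [Finset.card_univ, Fintype.card_fin] at h1
  omega

lemma exists_fifth {k : ℕ} (hk : 5 ≤ k) (a b c dd : Fin k) :
    ∃ ee : Fin k, ee ≠ a ∧ ee ≠ b ∧ ee ≠ c ∧ ee ≠ dd := by
  by_contra h
  push_neg at h
  have hsub : (Finset.univ : Finset (Fin k)) ⊆ {a, b, c, dd} := by
    intro x _
    simp only [Finset.mem_insert, Finset.mem_singleton]
    by_contra hx
    push_neg at hx
    exact hx.2.2.2 (h x hx.1 hx.2.1 hx.2.2.1)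
  have h1 := Finset.card_le_card hsub
  have h2 : ({a, b, c, dd} : Finset (Fin k)).card ≤ 4 := by
    apply le_trans (Finset.card_insert_le _ _)
    have h3 : ({b, c, dd} : Finset (Fin k)).card ≤ 3 := by
      apply le_trans (Finset.card_insert_le _ _)
      have := Finset.card_insert_le c ({dd} : Finset (Fin k))
      simp only [Finset.card_singleton] at this
      omega
    omega
  simp only [Finset.card_univ, Fintype.card_fin] at h1
  omega

section Tri
variable {m : ℕ} (X : Fin (m+3) → Fin (m+3) → ℝ)

lemma rel4 (hA : ∀ a b, X b a = - X a b)
    (hC : ∀ e : Equiv.Perm (Fin (m+3)), ∑ i : Fin (m+3), X (e i) (e (i+1)) = 0)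
    (hm : 1 ≤ m) (x y z w : Fin (m+3))
    (hxy : x ≠ y) (hxz : x ≠ z) (hxw : x ≠ w) (hyz : y ≠ z) (hyw : y ≠ w) (hzw : z ≠ w) :
    (X x y + X y z + X z x) + (X y z + X z w + X w y) = 0 := by
  have hP0 : (0:ℕ) < m + 3 := by omega
  have hP1 : (1:ℕ) < m + 3 := by omega
  have hP2 : (2:ℕ) < m + 3 := by omega
  have hP3 : (3:ℕ) < m + 3 := by omega
  set P0 : Fin (m+3) := ⟨0, hP0⟩ with hP0d
  set P1 : Fin (m+3) := ⟨1, hP1⟩ with hP1d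
  set P2 : Fin (m+3) := ⟨2, hP2⟩ with hP2d
  set P3 : Fin (m+3) := ⟨3, hP3⟩ with hP3d
  have q01 : P0 ≠ P1 := Fin.ne_of_val_ne (show (0:ℕ) ≠ 1 by omega)
  have q02 : P0 ≠ P2 := Fin.ne_of_val_ne (show (0:ℕ) ≠ 2 by omega)
  have q03 : P0 ≠ P3 := Fin.ne_of_val_ne (show (0:ℕ) ≠ 3 by omega)
  have q12 : P1 ≠ P2 := Fin.ne_of_val_ne (show (1:ℕ) ≠ 2 by omega)
  have q13 : P1 ≠ P3 := Fin.ne_of_val_ne (show (1:ℕ) ≠ 3 by omega)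
  have q23 : P2 ≠ P3 := Fin.ne_of_val_ne (show (2:ℕ) ≠ 3 by omega)
  have a01 : P0 + 1 = P1 := mk_add_one hP0 hP1
  have a12 : P1 + 1 = P2 := mk_add_one hP1 hP2
  have a23 : P2 + 1 = P3 := mk_add_one hP2 hP3
  obtain ⟨e, he0, he1, he2, he3⟩ :=
    exists_perm4 P0 P1 P2 P3 x y z w q01 q02 q03 q12 q13 q23 hxy hxz hxw hyz hyw hzw
  set s : Equiv.Perm (Fin (m+3)) := Equiv.swap P1 P2 with hsd
  have h1 := hC e
  have h2 := hC (e * s)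
  set D : Fin (m+3) → ℝ :=
    fun i => X (e i) (e (i+1)) - X (e (s i)) (e (s (i+1))) with hDd
  have key : ∑ i : Fin (m+3), D i = 0 := by
    rw [hDd, Finset.sum_sub_distrib, h1]
    rw [show (∑ i : Fin (m+3), X (e (s i)) (e (s (i+1)))) = 0 from h2]
    ring
  have hvanish : ∀ i ∈ (Finset.univ : Finset (Fin (m+3))),
      i ∉ ({P0, P1, P2} : Finset (Fin (m+3))) → D i = 0 := by
    intro i _ hi
    simp only [Finset.mem_insert, Finset.mem_singleton, not_or] at hi
    obtain ⟨hi0, hi1, hi2⟩ := hi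
    have hs1 : s i = i := Equiv.swap_apply_of_ne_of_ne hi1 hi2
    have hs2 : s (i+1) = i + 1 := by
      apply Equiv.swap_apply_of_ne_of_ne
      · rw [← a01]
        intro hh
        exact hi0 (add_right_cancel hh)
      · rw [← a12]
        intro hh
        exact hi1 (add_right_cancel hh)
    rw [hDd]
    simp only [hs1, hs2, sub_self]
  have hsplit := Finset.sum_subset (Finset.subset_univ ({P0, P1, P2} : Finset (Fin (m+3)))) hvanish
  rw [key] at hsplit
  have hmem1 : P0 ∉ ({P1, P2} : Finset (Fin (m+3))) := by
    simp only [Finset.mem_insert, Finset.mem_singleton, not_or]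
    exact ⟨q01, q02⟩
  have hmem2 : P1 ∉ ({P2} : Finset (Fin (m+3))) := by
    simp only [Finset.mem_singleton]
    exact q12
  rw [Finset.sum_insert hmem1, Finset.sum_insert hmem2, Finset.sum_singleton] at hsplit
  have sP0 : s P0 = P0 := Equiv.swap_apply_of_ne_of_ne q01 q02
  have sP1 : s P1 = P2 := Equiv.swap_apply_left _ _
  have sP2 : s P2 = P1 := Equiv.swap_apply_right _ _
  have sP3 : s P3 = P3 := Equiv.swap_apply_of_ne_of_ne (Ne.symm q13) (Ne.symm q23)
  rw [hDd] at hsplit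
  simp only [a01, a12, a23, sP0, sP1, sP2, sP3, he0, he1, he2, he3] at hsplit
  have e1 := hA x z
  have e2 := hA y z
  have e3 := hA y w
  have e4 := hA z x
  have e5 := hA w y
  linarith

end Tri

lemma tri {m : ℕ} (X : Fin (m+3) → Fin (m+3) → ℝ) (hA : ∀ a b, X b a = - X a b)
    (hC : ∀ e : Equiv.Perm (Fin (m+3)), ∑ i : Fin (m+3), X (e i) (e (i+1)) = 0)
    (a b c : Fin (m+3)) (hab : a ≠ b) (hac : a ≠ c) (hbc : b ≠ c) :
    X a b + X b c + X c a = 0 := by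
  match m, X, hA, hC, a, b, c, hab, hac, hbc with
  | 0, X, hA, hC, a, b, c, hab, hac, hbc =>
    obtain ⟨e, he0, he1, he2⟩ := exists_perm3 (0 : Fin 3) 1 2 a b c
      (by decide) (by decide) (by decide) hab hac hbc
    have key := hC e
    rw [Fin.sum_univ_three] at key
    have c0 : (0 : Fin 3) + 1 = 1 := by decide
    have c1 : (1 : Fin 3) + 1 = 2 := by decide
    have c2 : (2 : Fin 3) + 1 = 0 := by decide
    rw [c0, c1, c2, he0, he1, he2] at key
    have := hA c a
    linarith
  | 1, X, hA, hC, a, b, c, hab, hac, hbc =>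
    obtain ⟨dd, hda, hdb, hdc⟩ := exists_fourth (by omega) a b c
    obtain ⟨e, he0, he1, he2, he3⟩ := exists_perm4 (0 : Fin 4) 1 2 3 a b c dd
      (by decide) (by decide) (by decide) (by decide) (by decide) (by decide)
      hab hac hda.symm hbc hdb.symm hdc.symm
    have c0 : (0 : Fin 4) + 1 = 1 := by decide
    have c1 : (1 : Fin 4) + 1 = 2 := by decide
    have c2 : (2 : Fin 4) + 1 = 3 := by decide
    have c3 : (3 : Fin 4) + 1 = 0 := by decide
    have s12_0 : (Equiv.swap (1 : Fin 4) 2) 0 = 0 := by decide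
    have s12_1 : (Equiv.swap (1 : Fin 4) 2) 1 = 2 := by decide
    have s12_2 : (Equiv.swap (1 : Fin 4) 2) 2 = 1 := by decide
    have s12_3 : (Equiv.swap (1 : Fin 4) 2) 3 = 3 := by decide
    have s23_0 : (Equiv.swap (2 : Fin 4) 3) 0 = 0 := by decide
    have s23_1 : (Equiv.swap (2 : Fin 4) 3) 1 = 1 := by decide
    have s23_2 : (Equiv.swap (2 : Fin 4) 3) 2 = 3 := by decide
    have s23_3 : (Equiv.swap (2 : Fin 4) 3) 3 = 2 := by decide
    have k1 := hC e
    have k2 := hC (e * Equiv.swap (1 : Fin 4) 2)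
    have k3 := hC (e * Equiv.swap (2 : Fin 4) 3)
    rw [Fin.sum_univ_four] at k1 k2 k3
    simp only [Equiv.Perm.mul_apply, c0, c1, c2, c3, s12_0, s12_1, s12_2, s12_3,
      he0, he1, he2, he3] at k1 k2
    simp only [Equiv.Perm.mul_apply, c0, c1, c2, c3, s23_0, s23_1, s23_2, s23_3,
      he0, he1, he2, he3] at k3
    have a1 := hA a b
    have a2 := hA a c
    have a3 := hA a dd
    have a4 := hA b c
    have a5 := hA b dd
    have a6 := hA c dd
    linarith
  | (m' + 2), X, hA, hC, a, b, c, hab, hac, hbc =>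
    obtain ⟨dd, hda, hdb, hdc⟩ := exists_fourth (by omega) a b c
    obtain ⟨ee, hea, heb, hec, hed⟩ := exists_fifth (by omega) a b c dd
    have r1 := rel4 X hA hC (by omega) a b c dd hab hac hda.symm hbc hdb.symm hdc.symm
    have r2 := rel4 X hA hC (by omega) a b c ee hab hac hea.symm hbc heb.symm hec.symm
    have r3 := rel4 X hA hC (by omega) dd b c ee hdb hdc hed.symm hbc heb.symm hec.symm
    have a1 := hA b dd
    have a2 := hA c dd
    have a3 := hA dd b
    linarith

lemma Xdiff {m : ℕ} (X : Fin (m+3) → Fin (m+3) → ℝ) (hA : ∀ a b, X b a = - X a b)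
    (hC : ∀ e : Equiv.Perm (Fin (m+3)), ∑ i : Fin (m+3), X (e i) (e (i+1)) = 0)
    (hdiag : ∀ a, X a a = 0) (q : Fin (m+3)) (a b : Fin (m+3)) :
    X a b = X a q - X b q := by
  rcases eq_or_ne a b with rfl | hab
  · rw [hdiag]; ring
  rcases eq_or_ne b q with rfl | hbq
  · rw [hdiag]; ring
  rcases eq_or_ne a q with rfl | haq
  · rw [hdiag, hA b a]; ring
  · have := tri X hA hC a b q hab haq hbq
    have h2 := hA q a
    linarith

def qq (m : ℕ) : Fin (m+3) := last (m+2)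

variable {d m : ℕ}

lemma sgn_inv {k : ℕ} (σ : Equiv.Perm (Fin k)) : sgn σ⁻¹ = sgn σ := by
  have h1 := sgn_mul σ⁻¹ σ
  have h2 := sgn_sq σ
  rw [inv_mul_cancel, sgn_one] at h1
  nlinarith [sgn_sq σ⁻¹]

lemma sgn_ne_zero {k : ℕ} (σ : Equiv.Perm (Fin k)) : sgn σ ≠ 0 := by
  intro h
  have := sgn_sq σ
  rw [h, mul_zero] at this
  norm_num at this

lemma ppval : (pp m).val = m+1 := rfl
lemma qqval : (qq m).val = m+2 := rfl

lemma pq_ne : pp m ≠ qq m := by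
  intro h
  rw [Fin.ext_iff, ppval, qqval] at h
  omega

lemma qq_eq : qq m = pp m + 1 := by
  apply Fin.ext
  simp only [pp, qq]
  rw [Fin.val_add_one_of_lt (Fin.castSucc_lt_last (last (m+1)))]
  rfl

lemma sgn_finRotate' {m : ℕ} : sgn (finRotate (m+3)) = (-1 : ℝ)^(m+2) := by
  show ((Equiv.Perm.sign (finRotate (m+2+1)) : ℤ) : ℝ) = (-1 : ℝ)^(m+2)
  rw [sign_finRotate]
  push_cast
  ring

def gab (m : ℕ) (a b : Fin (m+3)) : Equiv.Perm (Fin (m+3)) :=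
  Equiv.swap (pp m) a * Equiv.swap (qq m) (Equiv.swap (pp m) a b)

lemma gab_p {a b : Fin (m+3)} (h : a ≠ b) : gab m a b (pp m) = a := by
  have h1 : Equiv.swap (pp m) a b ≠ pp m := by
    intro hh
    apply h
    have := congrArg (Equiv.swap (pp m) a) hh
    rw [Equiv.swap_apply_self, Equiv.swap_apply_left] at this
    exact this.symm
  rw [gab, Equiv.Perm.mul_apply,
    Equiv.swap_apply_of_ne_of_ne pq_ne (Ne.symm h1), Equiv.swap_apply_left]

lemma gab_q {a b : Fin (m+3)} (h : a ≠ b) : gab m a b (qq m) = b := by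
  rw [gab, Equiv.Perm.mul_apply, Equiv.swap_apply_left, Equiv.swap_apply_self]

noncomputable def Xf (S : (Fin (m+3) → Fin d) → ℝ) (μ : Fin (m+3) → Fin d)
    (a b : Fin (m+3)) : ℝ :=
  if a = b then 0 else sgn (gab m a b) * S (μ ∘ gab m a b)

section X
variable (S : (Fin (m+3) → Fin d) → ℝ) (μ : Fin (m+3) → Fin d)

lemma XW
    (hS1 : ∀ σ : Equiv.Perm (Fin (m+3)), σ (last (m+2)) = last (m+2) → σ (pp m) = pp m →
      ∀ ν : Fin (m+3) → Fin d, S (ν ∘ σ) = sgn σ * S ν)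
    (g : Equiv.Perm (Fin (m+3))) :
    S (μ ∘ g) = sgn g * Xf S μ (g (pp m)) (g (qq m)) := by
  have hne : g (pp m) ≠ g (qq m) := fun hh => pq_ne (g.injective hh)
  set G := gab m (g (pp m)) (g (qq m)) with hG
  have hGp : G (pp m) = g (pp m) := gab_p hne
  have hGq : G (qq m) = g (qq m) := gab_q hne
  have hrp : (G⁻¹ * g) (pp m) = pp m := by
    rw [Equiv.Perm.mul_apply, ← hGp, Equiv.Perm.inv_def, Equiv.symm_apply_apply]
  have hrq : (G⁻¹ * g) (last (m+2)) = last (m+2) := by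
    rw [Equiv.Perm.mul_apply]
    show G⁻¹ (g (qq m)) = qq m
    rw [← hGq, Equiv.Perm.inv_def, Equiv.symm_apply_apply]
  have key := hS1 (G⁻¹ * g) hrq hrp (μ ∘ ⇑G)
  have e1 : (μ ∘ ⇑G) ∘ ⇑(G⁻¹ * g) = μ ∘ ⇑g := by
    funext x
    simp [Equiv.Perm.mul_apply]
  rw [e1] at key
  rw [key, Xf, if_neg hne, sgn_mul, sgn_inv]
  ring

lemma Xanti
    (hS1 : ∀ σ : Equiv.Perm (Fin (m+3)), σ (last (m+2)) = last (m+2) → σ (pp m) = pp m →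
      ∀ ν : Fin (m+3) → Fin d, S (ν ∘ σ) = sgn σ * S ν)
    (hS2 : ∀ ν : Fin (m+3) → Fin d, S (ν ∘ Equiv.swap (pp m) (qq m)) = S ν)
    (a b : Fin (m+3)) :
    Xf S μ b a = - Xf S μ a b := by
  rcases eq_or_ne a b with rfl | h
  · simp [Xf]
  · set G := gab m a b with hG
    set g := G * Equiv.swap (pp m) (qq m) with hg
    have hgp : g (pp m) = b := by
      rw [hg, Equiv.Perm.mul_apply, Equiv.swap_apply_left, gab_q h]
    have hgq : g (qq m) = a := by
      rw [hg, Equiv.Perm.mul_apply, Equiv.swap_apply_right, gab_p h]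
    have hXW := XW S μ hS1 g
    rw [hgp, hgq] at hXW
    have e1 : μ ∘ ⇑g = (μ ∘ ⇑G) ∘ ⇑(Equiv.swap (pp m) (qq m)) := rfl
    rw [e1, hS2 (μ ∘ ⇑G)] at hXW
    have h2 : Xf S μ b a = sgn g * S (μ ∘ ⇑G) := by
      rw [hXW, ← mul_assoc, sgn_sq, one_mul]
    rw [h2, Xf, if_neg h, hg, sgn_mul, sgn_swap pq_ne]
    ring

lemma XCycle
    (hS1 : ∀ σ : Equiv.Perm (Fin (m+3)), σ (last (m+2)) = last (m+2) → σ (pp m) = pp m →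
      ∀ ν : Fin (m+3) → Fin d, S (ν ∘ σ) = sgn σ * S ν)
    (hS3 : ∀ ν : Fin (m+3) → Fin d,
      ∑ i ∈ Finset.range (m+3),
        (-1 : ℝ) ^ (i * (m+2)) * S (ν ∘ ⇑(finRotate (m+3) ^ i)) = 0)
    (e : Equiv.Perm (Fin (m+3))) :
    ∑ i : Fin (m+3), Xf S μ (e i) (e (i + 1)) = 0 := by
  set g : Equiv.Perm (Fin (m+3)) := e * (Equiv.subRight (pp m)) with hgdef
  have step : ∀ i ∈ Finset.range (m+3),
      (-1 : ℝ) ^ (i * (m+2)) * S ((μ ∘ ⇑g) ∘ ⇑(finRotate (m+3) ^ i))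
      = sgn g * Xf S μ (e ((i : Fin (m+3)))) (e ((i : Fin (m+3)) + 1)) := by
    intro i _
    have e2 : (μ ∘ ⇑g) ∘ ⇑(finRotate (m+3) ^ i) = μ ∘ ⇑(g * finRotate (m+3) ^ i) := rfl
    have app1 : (g * finRotate (m+3) ^ i) (pp m) = e ((i : Fin (m+3))) := by
      rw [Equiv.Perm.mul_apply, rot_pow]
      show e ((pp m + (i : Fin (m+3))) - pp m) = _
      congr 1
      ring
    have app2 : (g * finRotate (m+3) ^ i) (qq m) = e ((i : Fin (m+3)) + 1) := by
      rw [Equiv.Perm.mul_apply, rot_pow, qq_eq]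
      show e ((pp m + 1 + (i : Fin (m+3))) - pp m) = _
      congr 1
      ring
    rw [e2, XW S μ hS1 (g * finRotate (m+3) ^ i), app1, app2, sgn_mul, sgn_pow, sgn_finRotate']
    rw [show ∀ X : ℝ, (-1:ℝ)^(i*(m+2)) * (sgn g * ((-1:ℝ)^(m+2))^i * X)
        = ((-1:ℝ)^(i*(m+2)) * ((-1:ℝ)^(m+2))^i) * (sgn g * X) from fun X => by ring]
    rw [← pow_mul, ← pow_add, show i*(m+2) + (m+2)*i = 2*(i*(m+2)) from by ring, pow_mul]
    norm_num
  have key := hS3 (μ ∘ ⇑g)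
  rw [Finset.sum_congr rfl step, ← Finset.mul_sum] at key
  have hsum := (mul_eq_zero.mp key).resolve_left (sgn_ne_zero g)
  rw [← Fin.sum_univ_eq_sum_range
    (fun i => Xf S μ (e ((i : ℕ) : Fin (m+3))) (e (((i : ℕ) : Fin (m+3)) + 1))) (m+3)] at hsum
  simpa [Fin.cast_val_eq_self] using hsum

end X


lemma Zf_def {d k : ℕ} (T : (Fin (k+1) → Fin d) → ℝ) (μ : Fin (k+1) → Fin d) (a : Fin (k+1)) :
    Zf T μ a = sgn (Equiv.swap a (last k)) * T (μ ∘ Equiv.swap a (last k)) := rfl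

lemma Xf_diag {d m : ℕ} (S : (Fin (m+3) → Fin d) → ℝ) (μ : Fin (m+3) → Fin d) (a : Fin (m+3)) :
    Xf S μ a a = 0 := by
  simp [Xf]

/-! ### interface lemmas -/

lemma snoc_eq (σ : Equiv.Perm (Fin (m+2))) :
    (Fin.snoc (castSucc ∘ ⇑σ) (last (m+2)) : Fin (m+3) → Fin (m+3)) = ⇑(extL σ) := by
  funext x
  refine Fin.lastCases ?_ (fun i => ?_) x
  · rw [Fin.snoc_last, extL_last]
  · rw [extL_castSucc]
    exact Fin.snoc_castSucc _ _ i

lemma psi_eval (S : (Fin (m+3) → Fin d) → ℝ) (w : Fin (m+3) → Fin d) :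
    psi (n := m+2) S w
      = (2 * ((m+2 : ℕ) : ℝ) / (((m+2 : ℕ) : ℝ) + 1)) * (((m+2).factorial : ℝ))⁻¹ *
        ∑ σ : Equiv.Perm (Fin (m+2)), sgn σ * S (w ∘ extL σ) := by
  unfold psi
  congr 1
  exact Finset.sum_congr rfl fun σ _ => by rw [snoc_eq]

lemma phi_eval (T : (Fin (m+3) → Fin d) → ℝ) (w : Fin (m+3) → Fin d) :
    phi (n := m+2) T w = (1/2 : ℝ) * (T w + T (w ∘ Equiv.swap (pp m) (qq m))) := rfl

/-! ### part 3 : K → G for phi -/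

lemma hcomm (σ : Equiv.Perm (Fin (m+3))) (hp : σ (pp m) = pp m) (hq : σ (qq m) = qq m)
    (x : Fin (m+3)) :
    σ (Equiv.swap (pp m) (qq m) x) = Equiv.swap (pp m) (qq m) (σ x) := by
  rcases eq_or_ne x (pp m) with rfl | hxp
  · rw [Equiv.swap_apply_left, hq, hp, Equiv.swap_apply_left]
  rcases eq_or_ne x (qq m) with rfl | hxq
  · rw [Equiv.swap_apply_right, hp, hq, Equiv.swap_apply_right]
  · have h1 : σ x ≠ pp m := fun h => hxp (σ.injective (by rw [h, hp]))
    have h2 : σ x ≠ qq m := fun h => hxq (σ.injective (by rw [h, hq]))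
    rw [Equiv.swap_apply_of_ne_of_ne hxp hxq, Equiv.swap_apply_of_ne_of_ne h1 h2]

lemma part3 (T : (Fin (m+3) → Fin d) → ℝ) (hK : KCond (n := m+2) T) :
    GCond (n := m+2) (phi T) := by
  obtain ⟨hK1, hK2⟩ := hK
  have hK1' : ∀ σ : Equiv.Perm (Fin (m+3)), σ (last (m+2)) = last (m+2) →
      ∀ μ : Fin (m+3) → Fin d, T (μ ∘ σ) = sgn σ * T μ := hK1
  refine ⟨?_, ?_, ?_⟩
  · -- G1
    intro σ hlast hpp μ
    have hpp' : σ (pp m) = pp m := hpp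
    have hqq' : σ (qq m) = qq m := hlast
    have e1 : phi (n := m+2) T (fun i => μ (σ i)) = phi (n := m+2) T (μ ∘ ⇑σ) := rfl
    rw [e1, phi_eval, phi_eval]
    have t1 : T (μ ∘ ⇑σ) = sgn σ * T μ := hK1' σ hlast μ
    have e2 : (μ ∘ ⇑σ) ∘ ⇑(Equiv.swap (pp m) (qq m))
        = (μ ∘ ⇑(Equiv.swap (pp m) (qq m))) ∘ ⇑σ := by
      funext x
      exact congrArg μ (hcomm σ hpp' hqq' x)
    have t2 : T ((μ ∘ ⇑σ) ∘ ⇑(Equiv.swap (pp m) (qq m)))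
        = sgn σ * T (μ ∘ ⇑(Equiv.swap (pp m) (qq m))) := by
      rw [e2]
      exact hK1' σ hlast _
    rw [t1, t2]
    ring
  · -- G2
    intro μ
    show phi (n := m+2) T (μ ∘ ⇑(Equiv.swap (pp m) (qq m))) = phi (n := m+2) T μ
    rw [phi_eval, phi_eval]
    have e1 : (μ ∘ ⇑(Equiv.swap (pp m) (qq m))) ∘ ⇑(Equiv.swap (pp m) (qq m)) = μ := by
      funext x
      exact congrArg μ (Equiv.swap_apply_self _ _ x)
    rw [e1]
    ring
  · -- G3
    intro μ
    have step : ∀ i ∈ Finset.range (m+3),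
        (-1 : ℝ) ^ (i * (m+2)) * phi (n := m+2) T (fun j => μ ((finRotate (m+3) ^ i) j))
        = (1/2 : ℝ) * (Zf T μ (qq m + (i : Fin (m+3))) - Zf T μ (pp m + (i : Fin (m+3)))) := by
      intro i _
      have e1 : phi (n := m+2) T (fun j => μ ((finRotate (m+3) ^ i) j))
          = phi (n := m+2) T (μ ∘ ⇑(finRotate (m+3) ^ i)) := rfl
      rw [e1, phi_eval]
      have t1 : T (μ ∘ ⇑(finRotate (m+3) ^ i))
          = (-1 : ℝ)^((m+2)*i) * Zf T μ (qq m + (i : Fin (m+3))) := by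
        rw [ZW T hK1' μ (finRotate (m+3) ^ i), sgn_pow, sgn_finRotate', ← pow_mul]
        congr 2
        exact rot_pow i (last (m+2))
      have e2 : (μ ∘ ⇑(finRotate (m+3) ^ i)) ∘ ⇑(Equiv.swap (pp m) (qq m))
          = μ ∘ ⇑(finRotate (m+3) ^ i * Equiv.swap (pp m) (qq m)) := rfl
      have t2 : T ((μ ∘ ⇑(finRotate (m+3) ^ i)) ∘ ⇑(Equiv.swap (pp m) (qq m)))
          = -((-1 : ℝ)^((m+2)*i)) * Zf T μ (pp m + (i : Fin (m+3))) := by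
        rw [e2, ZW T hK1' μ _, sgn_mul, sgn_pow, sgn_finRotate', sgn_swap pq_ne, ← pow_mul]
        have happ : (finRotate (m+3) ^ i * Equiv.swap (pp m) (qq m)) (last (m+2))
            = pp m + (i : Fin (m+3)) := by
          rw [Equiv.Perm.mul_apply]
          have h0 : Equiv.swap (pp m) (qq m) (last (m+2)) = pp m := Equiv.swap_apply_right _ _
          rw [h0]
          exact rot_pow i (pp m)
        rw [happ]
        ring
      rw [t1, t2]
      have hpow : (-1 : ℝ) ^ (i * (m+2)) * (-1 : ℝ) ^ ((m+2) * i) = 1 := by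
        rw [← pow_add, show i*(m+2) + (m+2)*i = 2*(i*(m+2)) from by ring, pow_mul]
        norm_num
      calc (-1 : ℝ) ^ (i * (m+2)) * ((1/2 : ℝ) *
            ((-1 : ℝ)^((m+2)*i) * Zf T μ (qq m + (i : Fin (m+3)))
              + -((-1 : ℝ)^((m+2)*i)) * Zf T μ (pp m + (i : Fin (m+3)))))
          = ((-1 : ℝ) ^ (i * (m+2)) * (-1 : ℝ)^((m+2)*i)) * ((1/2 : ℝ) *
            (Zf T μ (qq m + (i : Fin (m+3))) - Zf T μ (pp m + (i : Fin (m+3))))) := by ring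
        _ = (1/2 : ℝ) * (Zf T μ (qq m + (i : Fin (m+3))) - Zf T μ (pp m + (i : Fin (m+3)))) := by
            rw [hpow, one_mul]
    rw [Finset.sum_congr rfl step, ← Finset.mul_sum, Finset.sum_sub_distrib]
    rw [sum_shift (Zf T μ) (qq m), sum_shift (Zf T μ) (pp m), sub_self, mul_zero]

/-! ### part 5 : psi ∘ phi = id on K -/

lemma coset_form (T : (Fin (m+3) → Fin d) → ℝ)
    (hK1' : ∀ σ : Equiv.Perm (Fin (m+3)), σ (last (m+2)) = last (m+2) →
      ∀ μ : Fin (m+3) → Fin d, T (μ ∘ σ) = sgn σ * T μ)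
    (hK2 : ∀ μ : Fin (m+3) → Fin d,
      ∑ σ : Equiv.Perm (Fin (m+3)), sgn σ * T (fun i => μ (σ i)) = 0)
    (w : Fin (m+3) → Fin d) :
    T w = ∑ a : Fin (m+2), T (w ∘ Equiv.swap (castSucc a) (last (m+2))) := by
  have h' : ∑ σ : Equiv.Perm (Fin (m+3)), sgn σ * T (w ∘ σ) = 0 := hK2 w
  rw [K1_sum T hK1' w] at h'
  have hf : ((m+2).factorial : ℝ) ≠ 0 := Nat.cast_ne_zero.mpr (Nat.factorial_ne_zero _)
  have h2 := (mul_eq_zero.mp h').resolve_left hf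
  linarith

lemma Zf_last (T : (Fin (m+3) → Fin d) → ℝ) (w : Fin (m+3) → Fin d) :
    Zf T w (last (m+2)) = T w := by
  rw [Zf_def, Equiv.swap_self]
  have e1 : (w ∘ ⇑(Equiv.refl (Fin (m+3)))) = w := rfl
  rw [e1]
  have h1 : sgn (Equiv.refl (Fin (m+3))) = 1 := sgn_one
  rw [h1, one_mul]

lemma Zsum (T : (Fin (m+3) → Fin d) → ℝ)
    (hK1' : ∀ σ : Equiv.Perm (Fin (m+3)), σ (last (m+2)) = last (m+2) →
      ∀ μ : Fin (m+3) → Fin d, T (μ ∘ σ) = sgn σ * T μ)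
    (hK2 : ∀ μ : Fin (m+3) → Fin d,
      ∑ σ : Equiv.Perm (Fin (m+3)), sgn σ * T (fun i => μ (σ i)) = 0)
    (w : Fin (m+3) → Fin d) :
    ∑ y : Fin (m+3), Zf T w y = 0 := by
  rw [Fin.sum_univ_castSucc, Zf_last]
  have hZc : ∀ a : Fin (m+2), Zf T w (castSucc a)
      = - T (w ∘ Equiv.swap (castSucc a) (last (m+2))) := by
    intro a
    rw [Zf_def, sgn_swap (Fin.castSucc_lt_last a).ne, neg_one_mul]
  rw [Finset.sum_congr rfl (fun a _ => hZc a), Finset.sum_neg_distrib, ← coset_form T hK1' hK2 w]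
  ring

lemma part5 (T : (Fin (m+3) → Fin d) → ℝ) (hK : KCond (n := m+2) T) :
    psi (n := m+2) (phi T) = T := by
  obtain ⟨hK1, hK2⟩ := hK
  have hK1' : ∀ σ : Equiv.Perm (Fin (m+3)), σ (last (m+2)) = last (m+2) →
      ∀ μ : Fin (m+3) → Fin d, T (μ ∘ σ) = sgn σ * T μ := hK1
  funext w
  rw [psi_eval]
  have hsplit : ∀ σ : Equiv.Perm (Fin (m+2)),
      sgn σ * phi (n := m+2) T (w ∘ extL σ)
      = (1/2 : ℝ) * (sgn σ * T (w ∘ extL σ)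
          + sgn σ * T (w ∘ ⇑(extL σ * Equiv.swap (pp m) (qq m)))) := by
    intro σ
    rw [phi_eval]
    have e1 : (w ∘ ⇑(extL σ)) ∘ ⇑(Equiv.swap (pp m) (qq m))
        = w ∘ ⇑(extL σ * Equiv.swap (pp m) (qq m)) := rfl
    rw [e1]
    ring
  have S1 : ∑ σ : Equiv.Perm (Fin (m+2)), sgn σ * T (w ∘ extL σ)
      = ((m+2).factorial : ℝ) * T w := by
    have hterm : ∀ σ : Equiv.Perm (Fin (m+2)), sgn σ * T (w ∘ extL σ) = T w := by
      intro σ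
      rw [hK1' (extL σ) (extL_last σ) w, sgn_extL, ← mul_assoc, sgn_sq, one_mul]
    rw [Finset.sum_congr rfl (fun σ _ => hterm σ), Finset.sum_const, card_univ,
      Fintype.card_perm, Fintype.card_fin, nsmul_eq_mul]
  have S2 : ∑ σ : Equiv.Perm (Fin (m+2)),
      sgn σ * T (w ∘ ⇑(extL σ * Equiv.swap (pp m) (qq m)))
      = ((m+1).factorial : ℝ) * T w := by
    have hterm : ∀ σ : Equiv.Perm (Fin (m+2)),
        sgn σ * T (w ∘ ⇑(extL σ * Equiv.swap (pp m) (qq m)))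
        = - Zf T w (castSucc (σ (last (m+1)))) := by
      intro σ
      rw [ZW T hK1' w (extL σ * Equiv.swap (pp m) (qq m))]
      have happ : (extL σ * Equiv.swap (pp m) (qq m)) (last (m+2))
          = castSucc (σ (last (m+1))) := by
        rw [Equiv.Perm.mul_apply]
        have h0 : Equiv.swap (pp m) (qq m) (last (m+2)) = pp m := Equiv.swap_apply_right _ _
        rw [h0]
        show extL σ (castSucc (last (m+1))) = _
        rw [extL_castSucc]
      rw [happ, sgn_mul, sgn_extL, sgn_swap pq_ne]
      linear_combination (- Zf T w (castSucc (σ (last (m+1))))) * sgn_sq σ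
    rw [Finset.sum_congr rfl (fun σ _ => hterm σ), Finset.sum_neg_distrib]
    rw [sum_apply_last (fun x => Zf T w (castSucc x))]
    have hZ := Zsum T hK1' hK2 w
    rw [Fin.sum_univ_castSucc, Zf_last] at hZ
    have hsum : ∑ a : Fin (m+2), Zf T w (castSucc a) = - T w := by linarith
    rw [hsum]
    ring
  rw [Finset.sum_congr rfl (fun σ _ => hsplit σ), ← Finset.mul_sum, Finset.sum_add_distrib, S1, S2]
  have hfac : ((m+2).factorial : ℝ) = ((m+2 : ℕ) : ℝ) * ((m+1).factorial : ℝ) := by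
    rw [show (m+2) = (m+1)+1 from rfl, Nat.factorial_succ]
    push_cast
    ring
  have hne1 : ((m+1).factorial : ℝ) ≠ 0 := Nat.cast_ne_zero.mpr (Nat.factorial_ne_zero _)
  have hne2 : ((m+2 : ℕ) : ℝ) ≠ 0 := by positivity
  have hne3 : (((m+2 : ℕ) : ℝ) + 1) ≠ 0 := by positivity
  rw [hfac]
  field_simp

/-! ### the E machinery (for parts 4 and 6) -/

lemma cc_ne_pp {m : ℕ} (j : Fin (m+1)) : (castSucc (castSucc j) : Fin (m+3)) ≠ pp m := by
  apply Fin.ne_of_val_ne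
  rw [Fin.coe_castSucc, Fin.coe_castSucc, ppval]
  have := j.isLt
  omega

lemma cc_ne_qq {m : ℕ} (j : Fin (m+1)) : (castSucc (castSucc j) : Fin (m+3)) ≠ qq m := by
  apply Fin.ne_of_val_ne
  rw [Fin.coe_castSucc, Fin.coe_castSucc, qqval]
  have := j.isLt
  omega

lemma cs_ne_qq {m : ℕ} (a : Fin (m+2)) : (castSucc a : Fin (m+3)) ≠ qq m := by
  apply Fin.ne_of_val_ne
  rw [Fin.coe_castSucc, qqval]
  have := a.isLt
  omega

section Emach
variable (S : (Fin (m+3) → Fin d) → ℝ) (μ : Fin (m+3) → Fin d)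
  (hS1 : ∀ σ : Equiv.Perm (Fin (m+3)), σ (last (m+2)) = last (m+2) → σ (pp m) = pp m →
      ∀ ν : Fin (m+3) → Fin d, S (ν ∘ σ) = sgn σ * S ν)
  (hS2 : ∀ ν : Fin (m+3) → Fin d, S (ν ∘ Equiv.swap (pp m) (qq m)) = S ν)
  (hS3 : ∀ ν : Fin (m+3) → Fin d,
      ∑ i ∈ Finset.range (m+3),
        (-1 : ℝ) ^ (i * (m+2)) * S (ν ∘ ⇑(finRotate (m+3) ^ i)) = 0)

include hS1 hS2 hS3 in
lemma Xh (a b : Fin (m+3)) :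
    Xf S μ a b = Xf S μ a (qq m) - Xf S μ b (qq m) :=
  Xdiff (Xf S μ) (Xanti S μ hS1 hS2) (XCycle S μ hS1 hS3) (Xf_diag S μ) (qq m) a b

include hS1 in
lemma Sid : S μ = Xf S μ (pp m) (qq m) := by
  have h := XW S μ hS1 1
  simp only [Equiv.Perm.coe_one, Function.comp_id, Equiv.Perm.one_apply] at h
  rw [h, sgn_one, one_mul]

include hS1 in
lemma SB (j : Fin (m+1)) :
    S (μ ∘ Equiv.swap (castSucc (castSucc j)) (pp m))
      = - Xf S μ (castSucc (castSucc j)) (qq m) := by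
  have h := XW S μ hS1 (Equiv.swap (castSucc (castSucc j)) (pp m))
  have h1 : Equiv.swap (castSucc (castSucc j)) (pp m) (pp m) = castSucc (castSucc j) :=
    Equiv.swap_apply_right _ _
  have h2 : Equiv.swap (castSucc (castSucc j)) (pp m) (qq m) = qq m :=
    Equiv.swap_apply_of_ne_of_ne (Ne.symm (cc_ne_qq j)) (Ne.symm pq_ne)
  rw [h1, h2, sgn_swap (cc_ne_pp j)] at h
  rw [h]
  ring

lemma sum_univ_h :
    ∑ x : Fin (m+3), Xf S μ x (qq m)
      = ∑ j : Fin (m+1), Xf S μ (castSucc (castSucc j)) (qq m)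
        + Xf S μ (pp m) (qq m) := by
  rw [Fin.sum_univ_castSucc (f := fun x : Fin (m+3) => Xf S μ x (qq m))]
  rw [Fin.sum_univ_castSucc (f := fun x : Fin (m+2) => Xf S μ (castSucc x) (qq m))]
  rw [show (last (m+2) : Fin (m+3)) = qq m from rfl, Xf_diag,
    show (castSucc (last (m+1)) : Fin (m+3)) = pp m from rfl]
  ring

include hS1 in
lemma E1 :
    S μ - ∑ j : Fin (m+1), S (μ ∘ Equiv.swap (castSucc (castSucc j)) (pp m))
      = ∑ x : Fin (m+3), Xf S μ x (qq m) := by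
  rw [Sid S μ hS1, Finset.sum_congr rfl (fun j _ => SB S μ hS1 j), Finset.sum_neg_distrib,
    sum_univ_h S μ]
  ring

include hS1 hS2 hS3 in
lemma E3 :
    S (μ ∘ ⇑(Equiv.swap (pp m) (qq m)))
      - ∑ j : Fin (m+1), S (μ ∘ ⇑(Equiv.swap (pp m) (qq m)
          * Equiv.swap (castSucc (castSucc j)) (pp m)))
      = ((m : ℝ) + 3) * Xf S μ (pp m) (qq m) - ∑ x : Fin (m+3), Xf S μ x (qq m) := by
  have t1 : S (μ ∘ ⇑(Equiv.swap (pp m) (qq m))) = Xf S μ (pp m) (qq m) := by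
    rw [hS2 μ]
    exact Sid S μ hS1
  have t2 : ∀ j : Fin (m+1),
      S (μ ∘ ⇑(Equiv.swap (pp m) (qq m) * Equiv.swap (castSucc (castSucc j)) (pp m)))
        = Xf S μ (castSucc (castSucc j)) (qq m) - Xf S μ (pp m) (qq m) := by
    intro j
    have h := XW S μ hS1 (Equiv.swap (pp m) (qq m) * Equiv.swap (castSucc (castSucc j)) (pp m))
    have h1 : (Equiv.swap (pp m) (qq m) * Equiv.swap (castSucc (castSucc j)) (pp m)) (pp m)
        = castSucc (castSucc j) := by
      rw [Equiv.Perm.mul_apply, Equiv.swap_apply_right,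
        Equiv.swap_apply_of_ne_of_ne (cc_ne_pp j) (cc_ne_qq j)]
    have h2 : (Equiv.swap (pp m) (qq m) * Equiv.swap (castSucc (castSucc j)) (pp m)) (qq m)
        = pp m := by
      rw [Equiv.Perm.mul_apply,
        Equiv.swap_apply_of_ne_of_ne (Ne.symm (cc_ne_qq j)) (Ne.symm pq_ne),
        Equiv.swap_apply_right]
    rw [h1, h2, sgn_mul, sgn_swap pq_ne, sgn_swap (cc_ne_pp j)] at h
    rw [h, Xh S μ hS1 hS2 hS3 (castSucc (castSucc j)) (pp m)]
    ring
  rw [t1, Finset.sum_congr rfl (fun j _ => t2 j), Finset.sum_sub_distrib, Finset.sum_const,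
    card_univ, Fintype.card_fin, nsmul_eq_mul, sum_univ_h S μ]
  push_cast
  ring

include hS1 hS2 hS3 in
lemma E2 (a : Fin (m+2)) :
    S (μ ∘ ⇑(Equiv.swap (castSucc a) (last (m+2))))
      - ∑ j : Fin (m+1), S (μ ∘ ⇑(Equiv.swap (castSucc a) (last (m+2))
            * Equiv.swap (castSucc (castSucc j)) (pp m)))
      = ((m : ℝ) + 3) * Xf S μ (castSucc a) (qq m) - ∑ x : Fin (m+3), Xf S μ x (qq m) := by
  rcases Fin.eq_castSucc_or_eq_last a with ⟨a₀, rfl⟩ | rfl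
  · have hcs_ne_pp : (castSucc (castSucc a₀) : Fin (m+3)) ≠ pp m := cc_ne_pp a₀
    have hcc_ne_last : (castSucc (castSucc a₀) : Fin (m+3)) ≠ last (m+2) := cc_ne_qq a₀
    have t1 : S (μ ∘ ⇑(Equiv.swap (castSucc (castSucc a₀)) (last (m+2))))
        = Xf S μ (castSucc (castSucc a₀)) (qq m) - Xf S μ (pp m) (qq m) := by
      have h := XW S μ hS1 (Equiv.swap (castSucc (castSucc a₀)) (last (m+2)))
      have h1 : Equiv.swap (castSucc (castSucc a₀)) (last (m+2)) (pp m) = pp m := by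
        apply Equiv.swap_apply_of_ne_of_ne (Ne.symm hcs_ne_pp)
        exact pq_ne
      have h2 : Equiv.swap (castSucc (castSucc a₀)) (last (m+2)) (qq m)
          = castSucc (castSucc a₀) := Equiv.swap_apply_right _ _
      rw [h1, h2, sgn_swap hcc_ne_last] at h
      rw [h, Xh S μ hS1 hS2 hS3 (pp m) (castSucc (castSucc a₀))]
      ring
    have t2 : ∀ j : Fin (m+1),
        S (μ ∘ ⇑(Equiv.swap (castSucc (castSucc a₀)) (last (m+2))
            * Equiv.swap (castSucc (castSucc j)) (pp m)))
        = Xf S μ (if j = a₀ then qq m else castSucc (castSucc j)) (qq m)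
            - Xf S μ (castSucc (castSucc a₀)) (qq m) := by
      intro j
      have h := XW S μ hS1 (Equiv.swap (castSucc (castSucc a₀)) (last (m+2))
        * Equiv.swap (castSucc (castSucc j)) (pp m))
      have h2 : (Equiv.swap (castSucc (castSucc a₀)) (last (m+2))
          * Equiv.swap (castSucc (castSucc j)) (pp m)) (qq m)
          = castSucc (castSucc a₀) := by
        rw [Equiv.Perm.mul_apply,
          Equiv.swap_apply_of_ne_of_ne (Ne.symm (cc_ne_qq j)) (Ne.symm pq_ne)]
        exact Equiv.swap_apply_right _ _
      have h1 : (Equiv.swap (castSucc (castSucc a₀)) (last (m+2))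
          * Equiv.swap (castSucc (castSucc j)) (pp m)) (pp m)
          = if j = a₀ then qq m else castSucc (castSucc j) := by
        rw [Equiv.Perm.mul_apply, Equiv.swap_apply_right]
        rcases eq_or_ne j a₀ with rfl | hj
        · rw [if_pos rfl]
          exact Equiv.swap_apply_left _ _
        · rw [if_neg hj]
          apply Equiv.swap_apply_of_ne_of_ne
          · intro hh
            exact hj (Fin.castSucc_injective _ (Fin.castSucc_injective _ hh))
          · exact cc_ne_qq j
      rw [h1, h2, sgn_mul, sgn_swap hcc_ne_last, sgn_swap (cc_ne_pp j)] at h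
      rw [h, Xh S μ hS1 hS2 hS3 (if j = a₀ then qq m else castSucc (castSucc j))
        (castSucc (castSucc a₀))]
      ring
    have hite : ∑ j : Fin (m+1),
        Xf S μ (if j = a₀ then qq m else castSucc (castSucc j)) (qq m)
        = ∑ j : Fin (m+1), Xf S μ (castSucc (castSucc j)) (qq m)
          - Xf S μ (castSucc (castSucc a₀)) (qq m) := by
      have e : ∀ j : Fin (m+1),
          Xf S μ (if j = a₀ then qq m else castSucc (castSucc j)) (qq m)
          = Xf S μ (castSucc (castSucc j)) (qq m)
            + (if j = a₀ then Xf S μ (qq m) (qq m) - Xf S μ (castSucc (castSucc j)) (qq m)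
              else 0) := by
        intro j
        split_ifs with hj
        · subst hj; ring
        · ring
      rw [Finset.sum_congr rfl (fun j _ => e j), Finset.sum_add_distrib, Fintype.sum_ite_eq']
      rw [Xf_diag]
      ring
    rw [t1, Finset.sum_congr rfl (fun j _ => t2 j), Finset.sum_sub_distrib, hite,
      Finset.sum_const, card_univ, Fintype.card_fin, nsmul_eq_mul, sum_univ_h S μ]
    push_cast
    ring
  · have hcs : (castSucc (last (m+1)) : Fin (m+3)) = pp m := rfl
    have hlq : (last (m+2) : Fin (m+3)) = qq m := rfl
    rw [hcs, hlq]
    have t2' : ∀ j : Fin (m+1),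
        S (μ ∘ ⇑(Equiv.swap (pp m) (qq m) * Equiv.swap (castSucc (castSucc j)) (pp m)))
        = Xf S μ (castSucc (castSucc j)) (qq m) - Xf S μ (pp m) (qq m) := by
      intro j
      have h := XW S μ hS1 (Equiv.swap (pp m) (qq m) * Equiv.swap (castSucc (castSucc j)) (pp m))
      have h1 : (Equiv.swap (pp m) (qq m) * Equiv.swap (castSucc (castSucc j)) (pp m)) (pp m)
          = castSucc (castSucc j) := by
        rw [Equiv.Perm.mul_apply, Equiv.swap_apply_right,
          Equiv.swap_apply_of_ne_of_ne (cc_ne_pp j) (cc_ne_qq j)]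
      have h2 : (Equiv.swap (pp m) (qq m) * Equiv.swap (castSucc (castSucc j)) (pp m)) (qq m)
          = pp m := by
        rw [Equiv.Perm.mul_apply,
          Equiv.swap_apply_of_ne_of_ne (Ne.symm (cc_ne_qq j)) (Ne.symm pq_ne),
          Equiv.swap_apply_right]
      rw [h1, h2, sgn_mul, sgn_swap pq_ne, sgn_swap (cc_ne_pp j)] at h
      rw [h, Xh S μ hS1 hS2 hS3 (castSucc (castSucc j)) (pp m)]
      ring
    have t1 : S (μ ∘ ⇑(Equiv.swap (pp m) (qq m))) = Xf S μ (pp m) (qq m) := by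
      rw [hS2 μ]
      exact Sid S μ hS1
    rw [t1, Finset.sum_congr rfl (fun j _ => t2' j), Finset.sum_sub_distrib, Finset.sum_const,
      card_univ, Fintype.card_fin, nsmul_eq_mul, sum_univ_h S μ]
    push_cast
    ring

end Emach
/-! ### part 4 : G → K for psi -/

lemma part4 (S : (Fin (m+3) → Fin d) → ℝ) (hG : GCond (n := m+2) S) :
    KCond (n := m+2) (psi S) := by
  obtain ⟨hG1, hG2, hG3⟩ := hG
  have hS1 : ∀ σ : Equiv.Perm (Fin (m+3)), σ (last (m+2)) = last (m+2) → σ (pp m) = pp m →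
      ∀ ν : Fin (m+3) → Fin d, S (ν ∘ σ) = sgn σ * S ν := fun σ h1 h2 ν => hG1 σ h1 h2 ν
  have hS2 : ∀ ν : Fin (m+3) → Fin d, S (ν ∘ Equiv.swap (pp m) (qq m)) = S ν := hG2
  have hS3 : ∀ ν : Fin (m+3) → Fin d, ∑ i ∈ Finset.range (m+3),
      (-1:ℝ)^(i*(m+2)) * S (ν ∘ ⇑(finRotate (m+3)^i)) = 0 := hG3
  have K1psi : ∀ σ : Equiv.Perm (Fin (m+3)), σ (last (m+2)) = last (m+2) →
      ∀ μ : Fin (m+3) → Fin d,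
        psi (n:=m+2) S (μ ∘ ⇑σ) = sgn σ * psi (n:=m+2) S μ := by
    intro σ hfix μ
    obtain ⟨ρ, rfl⟩ := exists_extL_of_fix_last σ hfix
    rw [psi_eval, psi_eval, sgn_extL]
    have reindex : ∑ σ' : Equiv.Perm (Fin (m+2)), sgn σ' * S ((μ ∘ ⇑(extL ρ)) ∘ extL σ')
        = ∑ τ : Equiv.Perm (Fin (m+2)), sgn ρ * (sgn τ * S (μ ∘ extL τ)) := by
      apply Fintype.sum_bijective (fun x => ρ * x) (Group.mulLeft_bijective ρ)
      intro σ'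
      have e1 : (μ ∘ ⇑(extL ρ)) ∘ ⇑(extL σ') = μ ∘ ⇑(extL (ρ * σ')) := by
        rw [extL_mul]; rfl
      rw [e1, sgn_mul]
      linear_combination (- (sgn σ' * S (μ ∘ ⇑(extL (ρ * σ'))))) * sgn_sq ρ
    rw [reindex, ← Finset.mul_sum]
    ring
  constructor
  · exact fun σ h μ => K1psi σ h μ
  · intro μ
    have e0 : (∑ σ : Equiv.Perm (Fin (m+3)), sgn σ * psi (n:=m+2) S (fun i => μ (σ i)))
        = ∑ σ : Equiv.Perm (Fin (m+3)), sgn σ * psi (n:=m+2) S (μ ∘ ⇑σ) := rfl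
    rw [e0, K1_sum (psi (n:=m+2) S) K1psi μ]
    have hpsiE : ∀ w : Fin (m+3) → Fin d, psi (n:=m+2) S w
        = (2 * ((m+2 : ℕ) : ℝ) / (((m+2 : ℕ) : ℝ) + 1)) * (((m+2).factorial : ℝ))⁻¹ *
          (((m+1).factorial : ℝ) *
            (S w - ∑ j : Fin (m+1), S (w ∘ Equiv.swap (castSucc (castSucc j)) (pp m)))) := by
      intro w
      rw [psi_eval, G1_sum S hS1 w]
    have hsum_a : ∑ a : Fin (m+2), Xf S μ (castSucc a) (qq m)
        = ∑ x : Fin (m+3), Xf S μ x (qq m) := by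
      rw [Fin.sum_univ_castSucc (f := fun x : Fin (m+3) => Xf S μ x (qq m)),
        show (last (m+2) : Fin (m+3)) = qq m from rfl, Xf_diag, add_zero]
    have hA : ∀ a : Fin (m+2),
        psi (n:=m+2) S (μ ∘ ⇑(Equiv.swap (castSucc a) (last (m+2))))
        = (2 * ((m+2 : ℕ) : ℝ) / (((m+2 : ℕ) : ℝ) + 1)) * (((m+2).factorial : ℝ))⁻¹ *
          (((m+1).factorial : ℝ) *
            (((m : ℝ) + 3) * Xf S μ (castSucc a) (qq m)
              - ∑ x : Fin (m+3), Xf S μ x (qq m))) := by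
      intro a
      rw [hpsiE (μ ∘ ⇑(Equiv.swap (castSucc a) (last (m+2))))]
      have ecomp : ∀ j : Fin (m+1),
          S ((μ ∘ ⇑(Equiv.swap (castSucc a) (last (m+2))))
              ∘ ⇑(Equiv.swap (castSucc (castSucc j)) (pp m)))
          = S (μ ∘ ⇑(Equiv.swap (castSucc a) (last (m+2))
              * Equiv.swap (castSucc (castSucc j)) (pp m))) := fun j => rfl
      rw [Finset.sum_congr rfl (fun j _ => ecomp j), E2 S μ hS1 hS2 hS3 a]
    have key : psi (n:=m+2) S μ
        = ∑ a : Fin (m+2), psi (n:=m+2) S (μ ∘ ⇑(Equiv.swap (castSucc a) (last (m+2)))) := by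
      rw [hpsiE μ, E1 S μ hS1, Finset.sum_congr rfl (fun a _ => hA a), ← Finset.mul_sum,
        ← Finset.mul_sum, Finset.sum_sub_distrib, ← Finset.mul_sum, hsum_a, Finset.sum_const,
        card_univ, Fintype.card_fin, nsmul_eq_mul]
      push_cast
      ring
    rw [key, sub_self, mul_zero]

/-! ### part 6 : phi ∘ psi = id on G -/

lemma part6 (S : (Fin (m+3) → Fin d) → ℝ) (hG : GCond (n := m+2) S) :
    phi (n := m+2) (psi S) = S := by
  obtain ⟨hG1, hG2, hG3⟩ := hG
  have hS1 : ∀ σ : Equiv.Perm (Fin (m+3)), σ (last (m+2)) = last (m+2) → σ (pp m) = pp m →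
      ∀ ν : Fin (m+3) → Fin d, S (ν ∘ σ) = sgn σ * S ν := fun σ h1 h2 ν => hG1 σ h1 h2 ν
  have hS2 : ∀ ν : Fin (m+3) → Fin d, S (ν ∘ Equiv.swap (pp m) (qq m)) = S ν := hG2
  have hS3 : ∀ ν : Fin (m+3) → Fin d, ∑ i ∈ Finset.range (m+3),
      (-1:ℝ)^(i*(m+2)) * S (ν ∘ ⇑(finRotate (m+3)^i)) = 0 := hG3
  have hpsiE : ∀ w : Fin (m+3) → Fin d, psi (n:=m+2) S w
      = (2 * ((m+2 : ℕ) : ℝ) / (((m+2 : ℕ) : ℝ) + 1)) * (((m+2).factorial : ℝ))⁻¹ *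
        (((m+1).factorial : ℝ) *
          (S w - ∑ j : Fin (m+1), S (w ∘ Equiv.swap (castSucc (castSucc j)) (pp m)))) := by
    intro w
    rw [psi_eval, G1_sum S hS1 w]
  funext w
  rw [phi_eval]
  have h1 : psi (n:=m+2) S w
      = (2 * ((m+2 : ℕ) : ℝ) / (((m+2 : ℕ) : ℝ) + 1)) * (((m+2).factorial : ℝ))⁻¹ *
        (((m+1).factorial : ℝ) * (∑ x : Fin (m+3), Xf S w x (qq m))) := by
    rw [hpsiE w, E1 S w hS1]
  have h2 : psi (n:=m+2) S (w ∘ ⇑(Equiv.swap (pp m) (qq m)))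
      = (2 * ((m+2 : ℕ) : ℝ) / (((m+2 : ℕ) : ℝ) + 1)) * (((m+2).factorial : ℝ))⁻¹ *
        (((m+1).factorial : ℝ) *
          (((m : ℝ) + 3) * Xf S w (pp m) (qq m) - ∑ x : Fin (m+3), Xf S w x (qq m))) := by
    rw [hpsiE (w ∘ ⇑(Equiv.swap (pp m) (qq m)))]
    have ecomp : ∀ j : Fin (m+1),
        S ((w ∘ ⇑(Equiv.swap (pp m) (qq m)))
            ∘ ⇑(Equiv.swap (castSucc (castSucc j)) (pp m)))
        = S (w ∘ ⇑(Equiv.swap (pp m) (qq m)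
            * Equiv.swap (castSucc (castSucc j)) (pp m))) := fun j => rfl
    rw [Finset.sum_congr rfl (fun j _ => ecomp j), E3 S w hS1 hS2 hS3]
  rw [h1, h2, Sid S w hS1]
  have hfac : ((m+2).factorial : ℝ) = ((m+2 : ℕ) : ℝ) * ((m+1).factorial : ℝ) := by
    rw [show (m+2) = (m+1)+1 from rfl, Nat.factorial_succ]
    push_cast
    ring
  have hne1 : ((m+1).factorial : ℝ) ≠ 0 := Nat.cast_ne_zero.mpr (Nat.factorial_ne_zero _)
  have hne2 : ((m+2 : ℕ) : ℝ) ≠ 0 := by positivity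
  have hne3 : (((m+2 : ℕ) : ℝ) + 1) ≠ 0 := by positivity
  rw [hfac]
  push_cast
  field_simp
  ring

/-! ### linearity -/

lemma part1 {d n : ℕ} (a b : ℝ) (T T' : (Fin (n+1) → Fin d) → ℝ) :
    phi (fun w => a * T w + b * T' w) = fun w => a * phi T w + b * phi T' w := by
  funext w
  simp only [phi]
  ring

lemma part2 {d n : ℕ} (a b : ℝ) (S S' : (Fin (n+1) → Fin d) → ℝ) :
    psi (fun w => a * S w + b * S' w) = fun w => a * psi S w + b * psi S' w := by
  funext w
  simp only [psi]
  have e : ∀ σ : Equiv.Perm (Fin n),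
      sgn σ * (a * S (w ∘ Fin.snoc (castSucc ∘ ⇑σ) (last n))
        + b * S' (w ∘ Fin.snoc (castSucc ∘ ⇑σ) (last n)))
      = a * (sgn σ * S (w ∘ Fin.snoc (castSucc ∘ ⇑σ) (last n)))
        + b * (sgn σ * S' (w ∘ Fin.snoc (castSucc ∘ ⇑σ) (last n))) := fun σ => by ring
  rw [Finset.sum_congr rfl (fun σ _ => e σ), Finset.sum_add_distrib,
    ← Finset.mul_sum, ← Finset.mul_sum]
  ring

end Stmt7

/-- (Corollary to Propositions 3 and 5: `K^n(M) ≅ G^n(M)`.)  For `d ≥ 1` and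
`n ≥ 2`, the maps `φ` and `ψ` are mutually inverse linear bijections between the space of
covariant `(n+1)`-tensors over `Fin d` satisfying the K-condition of degree `n` and the space
of those satisfying the G-condition of degree `n`: they are linear, `φ` maps the K-space into
the G-space, `ψ` maps the G-space into the K-space, `ψ ∘ φ` is the identity on the former and
`φ ∘ ψ` is the identity on the latter. -/
theorem stmt7 (d n : ℕ) (hd : 1 ≤ d) (hn : 2 ≤ n) :
    -- linearity of φ and ψ:
    (∀ (a b : ℝ) (T T' : (Fin (n + 1) → Fin d) → ℝ),
      phi (fun w => a * T w + b * T' w) = fun w => a * phi T w + b * phi T' w) ∧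
    (∀ (a b : ℝ) (S S' : (Fin (n + 1) → Fin d) → ℝ),
      psi (fun w => a * S w + b * S' w) = fun w => a * psi S w + b * psi S' w) ∧
    -- φ maps the K-space into the G-space and ψ maps the G-space into the K-space:
    (∀ T : (Fin (n + 1) → Fin d) → ℝ, KCond T → GCond (phi T)) ∧
    (∀ S : (Fin (n + 1) → Fin d) → ℝ, GCond S → KCond (psi S)) ∧
    -- ψ ∘ φ is the identity on the K-space:
    (∀ T : (Fin (n + 1) → Fin d) → ℝ, KCond T → psi (phi T) = T) ∧
    -- φ ∘ ψ is the identity on the G-space: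
    (∀ S : (Fin (n + 1) → Fin d) → ℝ, GCond S → phi (psi S) = S) := by
  obtain ⟨m, rfl⟩ : ∃ m, n = m + 2 := ⟨n - 2, by omega⟩
  exact ⟨fun a b T T' => Stmt7.part1 a b T T',
    fun a b S S' => Stmt7.part2 a b S S',
    fun T hK => Stmt7.part3 T hK,
    fun S hG => Stmt7.part4 S hG,
    fun T hK => Stmt7.part5 T hK,
    fun S hG => Stmt7.part6 S hG⟩
end
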